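/- arXiv:2503.15477 — 4 statements merged into one kernel-verified Lean document; each statement's English description precedes it below -/
import Mathlib

section
/- Fix a parameter θ ∈ ℝ^P and a prompt x ∈ X, let λ ≥ 0 and let M > 1. Define the KL-regularized reward r^KL(x,y;θ) = r_RM(x,y) − λ ln(π_θ(y|x)/π_{θ_ref}(y|x)) for a reference parameter θ_ref, and the per-prompt objective φ(θ;x) = Σ_{y∈Y} π_θ(y|x) r^KL(x,y;θ). If r^KL(x,y;θ) ∈ [−M, M] for all y ∈ Y, then ‖∇_θ φ(θ;x)‖ ≤ 6 M^{1/3} L J_x · (Var_{y∼π_θ(·|x)}[r^KL(x,y;θ)])^{1/3}, where J_x is the supremum over y ∈ Y and l ∈ {1,…,L} of the spectral norm of the Jacobian of θ ↦ f_θ(x, y_{<l}), and Var_{y∼π_θ(·|x)}[r^KL(x,y;θ)] = Σ_{y∈Y} π_θ(y|x)(r^KL(x,y;θ) − φ(θ;x))². -/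
set_option maxHeartbeats 1000000

open Finset

lemma abs_coord_le {V : Type*} [Fintype V] (u : EuclideanSpace ℝ V) (v : V) : |u v| ≤ ‖u‖ := by
  rw [EuclideanSpace.norm_eq, ← Real.sqrt_sq_eq_abs]
  apply Real.sqrt_le_sqrt
  have := Finset.single_le_sum (f := fun i => ‖u i‖^2) (fun i _ => sq_nonneg _) (mem_univ v)
  simpa [Real.norm_eq_abs, sq_abs] using this

lemma sum_prod_prefix_eq_one {L : ℕ} {V : Type*} [Fintype V] [Nonempty V]
    (p : (Fin L → V) → Fin L → V → ℝ)
    (hpre : ∀ (y y' : Fin L → V) (l : Fin L), (∀ l' : Fin L, l' < l → y l' = y' l') → p y l = p y' l)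
    (hsum : ∀ y l, ∑ v : V, p y l v = 1) :
    ∑ y : Fin L → V, ∏ l : Fin L, p y l (y l) = 1 := by
  have key : ∀ n ≤ L, ∑ y : Fin L → V, ∏ l ∈ univ.filter (fun l : Fin L => (l : ℕ) < n), p y l (y l)
      = (Fintype.card V : ℝ) ^ (L - n) := by
    intro n hn
    induction n with
    | zero =>
      simp only [Nat.not_lt_zero, filter_false, prod_empty]
      simp [Finset.card_univ]
    | succ n ih =>
      have hn' : n < L := hn
      have IH := ih (le_of_lt hn')
      set nn : Fin L := ⟨n, hn'⟩ with hnn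
      have hfilter : univ.filter (fun l : Fin L => (l : ℕ) < n + 1)
          = insert nn (univ.filter (fun l : Fin L => (l : ℕ) < n)) := by
        ext l
        simp only [mem_filter, mem_univ, true_and, mem_insert, Nat.lt_succ_iff_lt_or_eq]
        constructor
        · rintro (h | h)
          · exact Or.inr h
          · exact Or.inl (Fin.ext h)
        · rintro (h | h)
          · right; rw [h]
          · left; exact h
      have hnotmem : nn ∉ univ.filter (fun l : Fin L => (l : ℕ) < n) := by simp [hnn]
      set F : (Fin L → V) → ℝ := fun y => ∏ l ∈ univ.filter (fun l : Fin L => (l : ℕ) < n), p y l (y l) with hF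
      have hstep : ∀ y : Fin L → V,
          ∏ l ∈ univ.filter (fun l : Fin L => (l : ℕ) < n + 1), p y l (y l) = p y nn (y nn) * F y := by
        intro y; rw [hfilter, prod_insert hnotmem]
      have hFinv : ∀ (y y' : Fin L → V), (∀ j : Fin L, (j : ℕ) < n → y j = y' j) → F y = F y' := by
        intro y y' h
        apply Finset.prod_congr rfl
        intro l hl
        simp only [mem_filter, mem_univ, true_and] at hl
        rw [hpre y y' l (fun l' hl' => h l' (lt_trans hl' hl)), h l hl]
      have hpinv : ∀ (y y' : Fin L → V), (∀ j : Fin L, (j : ℕ) < n → y j = y' j) → p y nn = p y' nn := by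
        intro y y' h
        exact hpre y y' nn (fun l' hl' => h l' hl')
      classical
      set e := Equiv.funSplitAt nn V with he
      have hesymm : ∀ (v : V) (g : { j : Fin L // j ≠ nn } → V) (j : Fin L) (hj : j ≠ nn),
          e.symm (v, g) j = g ⟨j, hj⟩ := by
        intro v g j hj
        simp [he, Equiv.funSplitAt, Equiv.piSplitAt, hj]
      have hesymm_at : ∀ (v : V) (g : { j : Fin L // j ≠ nn } → V), e.symm (v, g) nn = v := by
        intro v g
        simp [he, Equiv.funSplitAt, Equiv.piSplitAt]
      obtain ⟨w₀⟩ := ‹Nonempty V›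
      have hagree : ∀ (v v' : V) (g : { j : Fin L // j ≠ nn } → V) (j : Fin L), (j : ℕ) < n →
          e.symm (v, g) j = e.symm (v', g) j := by
        intro v v' g j hj
        have hjne : j ≠ nn := by
          intro hcon; rw [hcon] at hj; simp [hnn] at hj
        rw [hesymm v g j hjne, hesymm v' g j hjne]
      have hsum1 : ∑ y : Fin L → V, p y nn (y nn) * F y
          = ∑ g : { j : Fin L // j ≠ nn } → V, F (e.symm (w₀, g)) := by
        rw [← e.symm.sum_comp (fun y => p y nn (y nn) * F y), Fintype.sum_prod_type_right]
        apply Finset.sum_congr rfl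
        intro g _
        have : ∀ v : V, p (e.symm (v, g)) nn (e.symm (v, g) nn) * F (e.symm (v, g))
            = p (e.symm (w₀, g)) nn v * F (e.symm (w₀, g)) := by
          intro v
          rw [hesymm_at v g, hpinv _ _ (hagree v w₀ g), hFinv _ _ (hagree v w₀ g)]
        rw [Finset.sum_congr rfl (fun v _ => this v), ← Finset.sum_mul, hsum _ nn, one_mul]
      have hsum2 : ∑ y : Fin L → V, F y
          = (Fintype.card V : ℝ) * ∑ g : { j : Fin L // j ≠ nn } → V, F (e.symm (w₀, g)) := by
        rw [← e.symm.sum_comp F, Fintype.sum_prod_type_right]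
        have : ∀ (g : { j : Fin L // j ≠ nn } → V) (v : V), F (e.symm (v, g)) = F (e.symm (w₀, g)) := by
          intro g v; exact hFinv _ _ (hagree v w₀ g)
        calc ∑ g : { j : Fin L // j ≠ nn } → V, ∑ v : V, F (e.symm (v, g))
            = ∑ g : { j : Fin L // j ≠ nn } → V, (Fintype.card V : ℝ) * F (e.symm (w₀, g)) := by
              apply Finset.sum_congr rfl; intro g _
              rw [Finset.sum_congr rfl (fun v _ => this g v), Finset.sum_const, card_univ,
                nsmul_eq_mul]
          _ = _ := by rw [Finset.mul_sum]
      have hcardpos : (0:ℝ) < (Fintype.card V : ℝ) := by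
        exact_mod_cast Fintype.card_pos
      have hLn : L - n = (L - (n+1)) + 1 := by omega
      calc ∑ y : Fin L → V, ∏ l ∈ univ.filter (fun l : Fin L => (l : ℕ) < n + 1), p y l (y l)
          = ∑ y : Fin L → V, p y nn (y nn) * F y := by
            exact Finset.sum_congr rfl (fun y _ => hstep y)
        _ = ∑ g : { j : Fin L // j ≠ nn } → V, F (e.symm (w₀, g)) := hsum1
        _ = (Fintype.card V : ℝ) ^ (L - (n+1)) := by
            have h2 := hsum2
            rw [IH, hLn, pow_succ] at h2
            have h3 : (Fintype.card V : ℝ) * ((Fintype.card V : ℝ) ^ (L - (n+1)))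
                = (Fintype.card V : ℝ) * ∑ g : { j : Fin L // j ≠ nn } → V, F (e.symm (w₀, g)) := by
              linarith [h2]
            exact (mul_left_cancel₀ (ne_of_gt hcardpos) h3).symm
  have := key L le_rfl
  simpa using this



/-- A general autoregressive policy: `π_θ(y|x) = ∏_l softmax(f_θ(x, y_{<l}))_{y_l}`, where
`f` maps parameters, a prompt, an output (only its prefix `y_{<l}` matters), and a position
to a logit vector in `ℝ^V`. -/
noncomputable def softmaxPolicy {P L : ℕ} {V X : Type*} [Fintype V]
    (f : EuclideanSpace ℝ (Fin P) → X → (Fin L → V) → Fin L → EuclideanSpace ℝ V)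
    (θ : EuclideanSpace ℝ (Fin P)) (x : X) (y : Fin L → V) : ℝ :=
  ∏ l : Fin L, Real.exp (f θ x y l (y l)) / ∑ v : V, Real.exp (f θ x y l v)

/-- Proposition 1: if the KL-regularized reward `r^KL(x, ·; θ)` lies in `[-M, M]`, then the
gradient of the per-prompt objective `φ(θ; x) = Σ_y π_θ(y|x) r^KL(x,y;θ)` satisfies
`‖∇_θ φ(θ;x)‖ ≤ 6 M^{1/3} L J_x · Var_{y∼π_θ(·|x)}[r^KL(x,y;θ)]^{1/3}`. -/
theorem grad_norm_bound_with_kl {P L : ℕ} {V X : Type*} [Fintype V] [Fintype X]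
    (f : EuclideanSpace ℝ (Fin P) → X → (Fin L → V) → Fin L → EuclideanSpace ℝ V)
    (hprefix : ∀ θ x (y y' : Fin L → V) (l : Fin L),
      (∀ l' : Fin L, l' < l → y l' = y' l') → f θ x y l = f θ x y' l)
    (hdiff : ∀ x y l, Differentiable ℝ fun θ => f θ x y l)
    (rRM : X → (Fin L → V) → ℝ)
    (hrRM : ∀ x y, rRM x y ∈ Set.Icc (-1 : ℝ) 1)
    (lam : ℝ) (hlam : 0 ≤ lam)
    (θref θ : EuclideanSpace ℝ (Fin P)) (x : X)
    (M : ℝ) (hM : 1 < M)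
    (rKL : (Fin L → V) → EuclideanSpace ℝ (Fin P) → ℝ)
    (hrKL : ∀ y ϑ, rKL y ϑ =
      rRM x y - lam * Real.log (softmaxPolicy f ϑ x y / softmaxPolicy f θref x y))
    (φx : EuclideanSpace ℝ (Fin P) → ℝ)
    (hφx : ∀ ϑ, φx ϑ = ∑ y : Fin L → V, softmaxPolicy f ϑ x y * rKL y ϑ)
    (hbd : ∀ y : Fin L → V, rKL y θ ∈ Set.Icc (-M) M) :
    ‖gradient φx θ‖ ≤
      6 * M ^ ((1 : ℝ) / 3) * (L : ℝ) *
        (⨆ y : Fin L → V, ⨆ l : Fin L, ‖fderiv ℝ (fun ϑ => f ϑ x y l) θ‖) *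
        (∑ y : Fin L → V, softmaxPolicy f θ x y * (rKL y θ - φx θ) ^ 2) ^ ((1 : ℝ) / 3) := by
  classical
  set J := (⨆ y : Fin L → V, ⨆ l : Fin L, ‖fderiv ℝ (fun ϑ => f ϑ x y l) θ‖) with hJdef
  have hJ0 : 0 ≤ J :=
    Real.iSup_nonneg fun y => Real.iSup_nonneg fun l => norm_nonneg _
  have hMpos : (0:ℝ) < M := lt_trans one_pos hM
  rcases isEmpty_or_nonempty V with hV | hV
  · -- V empty
    rcases Nat.eq_zero_or_pos L with hL | hL
    · -- L = 0 : φx is constant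
      subst hL
      have hπ1 : ∀ (ϑ : EuclideanSpace ℝ (Fin P)) (y : Fin 0 → V),
          softmaxPolicy f ϑ x y = 1 := by
        intro ϑ y; rw [softmaxPolicy]; simp
      have hφconst : φx = fun _ => ∑ y : Fin 0 → V, (rRM x y - lam * Real.log 1) := by
        funext ϑ
        rw [hφx]
        apply Finset.sum_congr rfl
        intro y _
        rw [hπ1, hrKL, hπ1, hπ1, one_mul]
        norm_num
      rw [hφconst, gradient_fun_const]
      simp only [norm_zero, Nat.cast_zero, mul_zero, zero_mul]
      exact le_rfl

    · -- L > 0, V empty: no outputs at all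
      have hEmpty : IsEmpty (Fin L → V) := ⟨fun y => hV.elim (y ⟨0, hL⟩)⟩
      have hφ0 : φx = fun _ => (0:ℝ) := by
        funext ϑ; rw [hφx]; simp
      have hsum0 : (∑ y : Fin L → V, softmaxPolicy f θ x y * (rKL y θ - φx θ) ^ 2) = 0 := by simp
      rw [hsum0, Real.zero_rpow (by norm_num), mul_zero, hφ0, gradient_fun_const, norm_zero]
  · -- V nonempty : the main case
    have hZpos : ∀ (ϑ : EuclideanSpace ℝ (Fin P)) (y : Fin L → V) (l : Fin L),
        0 < ∑ v : V, Real.exp (f ϑ x y l v) :=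
      fun ϑ y l => Finset.sum_pos (fun v _ => Real.exp_pos _) Finset.univ_nonempty
    set s : EuclideanSpace ℝ (Fin P) → (Fin L → V) → ℝ :=
      fun ϑ y => ∑ l : Fin L, (f ϑ x y l (y l) - Real.log (∑ v : V, Real.exp (f ϑ x y l v)))
      with hsdef
    have hπs : ∀ (ϑ : EuclideanSpace ℝ (Fin P)) (y : Fin L → V),
        softmaxPolicy f ϑ x y = Real.exp (s ϑ y) := by
      intro ϑ y
      rw [softmaxPolicy, hsdef, Real.exp_sum]
      exact Finset.prod_congr rfl fun l _ => by
        rw [Real.exp_sub, Real.exp_log (hZpos ϑ y l)]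
    have hπpos : ∀ (ϑ : EuclideanSpace ℝ (Fin P)) (y : Fin L → V),
        0 < softmaxPolicy f ϑ x y := fun ϑ y => (hπs ϑ y) ▸ Real.exp_pos _
    have hπsum : ∀ (ϑ : EuclideanSpace ℝ (Fin P)),
        ∑ y : Fin L → V, softmaxPolicy f ϑ x y = 1 := by
      intro ϑ
      have h := sum_prod_prefix_eq_one
        (fun (y : Fin L → V) (l : Fin L) (v : V) =>
          Real.exp (f ϑ x y l v) / ∑ v' : V, Real.exp (f ϑ x y l v'))
        (by
          intro y y' l hpre
          have hf := hprefix ϑ x y y' l hpre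
          funext v; dsimp only; rw [hf])
        (by
          intro y l
          rw [← Finset.sum_div, div_self (ne_of_gt (hZpos ϑ y l))])
      rw [← h]
      exact Finset.sum_congr rfl fun y _ => by rw [softmaxPolicy]
    -- derivatives of coordinates of f
    set A : (Fin L → V) → Fin L → V → (EuclideanSpace ℝ (Fin P) →L[ℝ] ℝ) :=
      fun y l v => (EuclideanSpace.proj v).comp (fderiv ℝ (fun ϑ => f ϑ x y l) θ) with hAdef
    have hA : ∀ y l v, HasFDerivAt (fun ϑ => f ϑ x y l v) (A y l v) θ := by
      intro y l v
      have h := ((EuclideanSpace.proj v : EuclideanSpace ℝ V →L[ℝ] ℝ).hasFDerivAt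
        (x := f θ x y l)).comp θ (hdiff x y l θ).hasFDerivAt
      exact h
    have hJle : ∀ y l, ‖fderiv ℝ (fun ϑ => f ϑ x y l) θ‖ ≤ J := by
      intro y l
      have h1 : ‖fderiv ℝ (fun ϑ => f ϑ x y l) θ‖
          ≤ ⨆ l : Fin L, ‖fderiv ℝ (fun ϑ => f ϑ x y l) θ‖ :=
        le_ciSup (f := fun l : Fin L => ‖fderiv ℝ (fun ϑ => f ϑ x y l) θ‖)
          (Set.finite_range _).bddAbove l
      refine h1.trans ?_
      rw [hJdef]
      exact le_ciSup (f := fun y : Fin L → V =>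
          ⨆ l : Fin L, ‖fderiv ℝ (fun ϑ => f ϑ x y l) θ‖)
        (Set.finite_range _).bddAbove y
    have hAnorm : ∀ y l v, ‖A y l v‖ ≤ J := by
      intro y l v
      have hproj : ‖(EuclideanSpace.proj v : EuclideanSpace ℝ V →L[ℝ] ℝ)‖ ≤ 1 := by
        refine ContinuousLinearMap.opNorm_le_bound _ zero_le_one fun u => ?_
        simpa [Real.norm_eq_abs] using abs_coord_le u v
      calc ‖A y l v‖ ≤ ‖(EuclideanSpace.proj v : EuclideanSpace ℝ V →L[ℝ] ℝ)‖ *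
            ‖fderiv ℝ (fun ϑ => f ϑ x y l) θ‖ := ContinuousLinearMap.opNorm_comp_le _ _
        _ ≤ 1 * J := mul_le_mul hproj (hJle y l) (norm_nonneg _) zero_le_one
        _ = J := one_mul J
    set S : (Fin L → V) → (EuclideanSpace ℝ (Fin P) →L[ℝ] ℝ) :=
      fun y => ∑ l : Fin L, (A y l (y l) -
        (∑ v : V, Real.exp (f θ x y l v))⁻¹ • ∑ v : V, Real.exp (f θ x y l v) • A y l v)
      with hSdef
    have hS : ∀ y, HasFDerivAt (fun ϑ => s ϑ y) (S y) θ := by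
      intro y
      rw [hsdef, hSdef]
      refine HasFDerivAt.fun_sum (fun l _ => ?_)
      refine (hA y l (y l)).sub ?_
      have hZd : HasFDerivAt (fun ϑ => ∑ v : V, Real.exp (f ϑ x y l v))
          (∑ v : V, Real.exp (f θ x y l v) • A y l v) θ :=
        HasFDerivAt.fun_sum (fun v _ => (hA y l v).exp)
      exact hZd.log (ne_of_gt (hZpos θ y l))
    have hSnorm : ∀ y, ‖S y‖ ≤ 2 * (L:ℝ) * J := by
      intro y
      rw [hSdef]
      refine le_trans (norm_sum_le _ _) ?_
      have hterm : ∀ l : Fin L, ‖A y l (y l) -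
          (∑ v : V, Real.exp (f θ x y l v))⁻¹ • ∑ v : V, Real.exp (f θ x y l v) • A y l v‖
          ≤ 2 * J := by
        intro l
        refine le_trans (norm_sub_le _ _) ?_
        have h1 : ‖A y l (y l)‖ ≤ J := hAnorm y l (y l)
        have h2 : ‖(∑ v : V, Real.exp (f θ x y l v))⁻¹ •
            ∑ v : V, Real.exp (f θ x y l v) • A y l v‖ ≤ J := by
          refine le_trans (ContinuousLinearMap.opNorm_smul_le _ _) ?_
          rw [Real.norm_eq_abs, abs_of_pos (inv_pos.mpr (hZpos θ y l))]
          have h3 : ‖∑ v : V, Real.exp (f θ x y l v) • A y l v‖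
              ≤ (∑ v : V, Real.exp (f θ x y l v)) * J := by
            refine le_trans (norm_sum_le _ _) ?_
            rw [Finset.sum_mul]
            refine Finset.sum_le_sum fun v _ => ?_
            refine le_trans (ContinuousLinearMap.opNorm_smul_le _ _) ?_
            rw [Real.norm_eq_abs, abs_of_pos (Real.exp_pos _)]
            exact mul_le_mul_of_nonneg_left (hAnorm y l v) (le_of_lt (Real.exp_pos _))
          calc (∑ v : V, Real.exp (f θ x y l v))⁻¹ * ‖∑ v : V, Real.exp (f θ x y l v) • A y l v‖
              ≤ (∑ v : V, Real.exp (f θ x y l v))⁻¹ * ((∑ v : V, Real.exp (f θ x y l v)) * J) :=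
                mul_le_mul_of_nonneg_left h3 (le_of_lt (inv_pos.mpr (hZpos θ y l)))
            _ = J := by
                rw [← mul_assoc, inv_mul_cancel₀ (ne_of_gt (hZpos θ y l)), one_mul]
        linarith
      calc ∑ l : Fin L, ‖A y l (y l) -
            (∑ v : V, Real.exp (f θ x y l v))⁻¹ • ∑ v : V, Real.exp (f θ x y l v) • A y l v‖
          ≤ ∑ _l : Fin L, 2 * J := Finset.sum_le_sum fun l _ => hterm l
        _ = 2 * (L:ℝ) * J := by
            rw [Finset.sum_const, card_univ, Fintype.card_fin, nsmul_eq_mul]; ring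
    have hπd : ∀ y, HasFDerivAt (fun ϑ => softmaxPolicy f ϑ x y)
        (softmaxPolicy f θ x y • S y) θ := by
      intro y
      have h1 : (fun ϑ => softmaxPolicy f ϑ x y) = fun ϑ => Real.exp (s ϑ y) :=
        funext fun ϑ => hπs ϑ y
      rw [h1, hπs θ y]
      exact (hS y).exp
    have hrKLd : ∀ y, HasFDerivAt (rKL y) ((-lam) • S y) θ := by
      intro y
      have h1 : rKL y = fun ϑ =>
          rRM x y - lam * (s ϑ y - Real.log (softmaxPolicy f θref x y)) := by
        funext ϑ
        rw [hrKL, Real.log_div (ne_of_gt (hπpos ϑ y)) (ne_of_gt (hπpos θref y)),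
          hπs ϑ y, Real.log_exp]
      rw [h1]
      have h2 := ((hS y).sub_const (Real.log (softmaxPolicy f θref x y))).const_mul lam
      have h3 := (hasFDerivAt_const (rRM x y) θ).sub h2
      have h4 : (0 : EuclideanSpace ℝ (Fin P) →L[ℝ] ℝ) - lam • S y = (-lam) • S y := by
        rw [zero_sub]; exact (neg_smul lam (S y)).symm
      rw [← h4]
      exact h3
    have hφd : HasFDerivAt φx
        (∑ y : Fin L → V, (softmaxPolicy f θ x y • ((-lam) • S y) +
          rKL y θ • (softmaxPolicy f θ x y • S y))) θ := by
      have hφeq : φx = fun ϑ => ∑ y : Fin L → V, softmaxPolicy f ϑ x y * rKL y ϑ :=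
        funext hφx
      rw [hφeq]
      exact HasFDerivAt.fun_sum fun y _ => (hπd y).mul (hrKLd y)
    have hsumS0 : (∑ y : Fin L → V, softmaxPolicy f θ x y • S y) = 0 := by
      have h1 : HasFDerivAt (fun ϑ => ∑ y : Fin L → V, softmaxPolicy f ϑ x y)
          (∑ y : Fin L → V, softmaxPolicy f θ x y • S y) θ :=
        HasFDerivAt.fun_sum fun y _ => hπd y
      have h2 : (fun ϑ : EuclideanSpace ℝ (Fin P) => ∑ y : Fin L → V, softmaxPolicy f ϑ x y)
          = fun _ => (1:ℝ) := funext hπsum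
      rw [h2] at h1
      exact h1.unique (hasFDerivAt_const 1 θ)
    have Dkey : fderiv ℝ φx θ
        = ∑ y : Fin L → V, (softmaxPolicy f θ x y * (rKL y θ - φx θ)) • S y := by
      rw [hφd.fderiv]
      have hterm : ∀ y : Fin L → V,
          softmaxPolicy f θ x y • ((-lam) • S y) + rKL y θ • (softmaxPolicy f θ x y • S y)
          = (softmaxPolicy f θ x y * (rKL y θ - φx θ)) • S y +
            (φx θ - lam) • (softmaxPolicy f θ x y • S y) := by
        intro y; module
      rw [Finset.sum_congr rfl (fun y _ => hterm y), Finset.sum_add_distrib,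
        ← Finset.smul_sum, hsumS0, smul_zero, add_zero]
    have hgradnorm : ‖gradient φx θ‖ = ‖fderiv ℝ φx θ‖ :=
      (InnerProductSpace.toDual ℝ (EuclideanSpace ℝ (Fin P))).symm.norm_map _
    clear_value s A S
    -- scalar quantities
    have hφM : |φx θ| ≤ M := by
      rw [hφx θ]
      refine le_trans (Finset.abs_sum_le_sum_abs _ _) ?_
      calc ∑ y : Fin L → V, |softmaxPolicy f θ x y * rKL y θ|
          ≤ ∑ y : Fin L → V, softmaxPolicy f θ x y * M := by
            refine Finset.sum_le_sum fun y _ => ?_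
            rw [abs_mul, abs_of_pos (hπpos θ y)]
            exact mul_le_mul_of_nonneg_left (abs_le.mpr ⟨(hbd y).1, (hbd y).2⟩)
              (le_of_lt (hπpos θ y))
        _ = M := by rw [← Finset.sum_mul, hπsum θ, one_mul]
    have hdM : ∀ y : Fin L → V, |rKL y θ - φx θ| ≤ 2 * M := by
      intro y
      have h1 : |rKL y θ| ≤ M := abs_le.mpr ⟨(hbd y).1, (hbd y).2⟩
      calc |rKL y θ - φx θ| ≤ |rKL y θ| + |φx θ| := abs_sub _ _
        _ ≤ 2 * M := by linarith
    have hnormb : ‖fderiv ℝ φx θ‖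
        ≤ (2 * (L:ℝ) * J) * ∑ y : Fin L → V, softmaxPolicy f θ x y * |rKL y θ - φx θ| := by
      rw [Dkey]
      refine le_trans (norm_sum_le _ _) ?_
      rw [Finset.mul_sum]
      refine Finset.sum_le_sum fun y _ => ?_
      refine le_trans (ContinuousLinearMap.opNorm_smul_le _ _) ?_
      rw [Real.norm_eq_abs, abs_mul, abs_of_pos (hπpos θ y)]
      calc softmaxPolicy f θ x y * |rKL y θ - φx θ| * ‖S y‖
          ≤ softmaxPolicy f θ x y * |rKL y θ - φx θ| * (2 * (L:ℝ) * J) := by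
            refine mul_le_mul_of_nonneg_left (hSnorm y) ?_
            exact mul_nonneg (le_of_lt (hπpos θ y)) (abs_nonneg _)
        _ = 2 * (L:ℝ) * J * (softmaxPolicy f θ x y * |rKL y θ - φx θ|) := by ring
    set Var := (∑ y : Fin L → V, softmaxPolicy f θ x y * (rKL y θ - φx θ) ^ 2) with hVardef
    have hVar0 : 0 ≤ Var := by
      rw [hVardef]
      exact Finset.sum_nonneg fun y _ => mul_nonneg (le_of_lt (hπpos θ y)) (sq_nonneg _)
    have hVle : Var ≤ 4 * M ^ 2 := by
      rw [hVardef]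
      calc ∑ y : Fin L → V, softmaxPolicy f θ x y * (rKL y θ - φx θ) ^ 2
          ≤ ∑ y : Fin L → V, softmaxPolicy f θ x y * (2 * M) ^ 2 := by
            refine Finset.sum_le_sum fun y _ => ?_
            refine mul_le_mul_of_nonneg_left ?_ (le_of_lt (hπpos θ y))
            rw [← sq_abs]
            exact pow_le_pow_left₀ (abs_nonneg _) (hdM y) 2
        _ = 4 * M ^ 2 := by rw [← Finset.sum_mul, hπsum θ, one_mul]; ring
    have hCS : ∑ y : Fin L → V, softmaxPolicy f θ x y * |rKL y θ - φx θ| ≤ Real.sqrt Var := by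
      have h := Finset.sum_mul_sq_le_sq_mul_sq Finset.univ
        (fun y : Fin L → V => Real.sqrt (softmaxPolicy f θ x y))
        (fun y : Fin L → V => Real.sqrt (softmaxPolicy f θ x y) * |rKL y θ - φx θ|)
      have e1 : ∑ y : Fin L → V, Real.sqrt (softmaxPolicy f θ x y) *
            (Real.sqrt (softmaxPolicy f θ x y) * |rKL y θ - φx θ|)
          = ∑ y : Fin L → V, softmaxPolicy f θ x y * |rKL y θ - φx θ| :=
        Finset.sum_congr rfl fun y _ => by
          rw [← mul_assoc, Real.mul_self_sqrt (le_of_lt (hπpos θ y))]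
      have e2 : ∑ y : Fin L → V, Real.sqrt (softmaxPolicy f θ x y) ^ 2 = 1 := by
        rw [Finset.sum_congr rfl fun y _ => Real.sq_sqrt (le_of_lt (hπpos θ y)), hπsum θ]
      have e3 : ∑ y : Fin L → V,
            (Real.sqrt (softmaxPolicy f θ x y) * |rKL y θ - φx θ|) ^ 2 = Var := by
        rw [hVardef]
        refine Finset.sum_congr rfl fun y _ => ?_
        rw [mul_pow, Real.sq_sqrt (le_of_lt (hπpos θ y)), sq_abs]
      rw [e1, e2, e3, one_mul] at h
      have h4 : 0 ≤ ∑ y : Fin L → V, softmaxPolicy f θ x y * |rKL y θ - φx θ| :=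
        Finset.sum_nonneg fun y _ => mul_nonneg (le_of_lt (hπpos θ y)) (abs_nonneg _)
      rw [← Real.sqrt_sq h4]
      exact Real.sqrt_le_sqrt h
    clear_value Var
    rw [hgradnorm]
    refine le_trans hnormb ?_
    have h2LJ : (0:ℝ) ≤ 2 * (L:ℝ) * J :=
      mul_nonneg (mul_nonneg (by norm_num) (Nat.cast_nonneg L)) hJ0
    by_cases hV0 : Var = 0
    · rw [hV0, Real.zero_rpow (by norm_num), mul_zero]
      calc (2 * (L:ℝ) * J) * ∑ y : Fin L → V, softmaxPolicy f θ x y * |rKL y θ - φx θ|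
          ≤ (2 * (L:ℝ) * J) * Real.sqrt Var := mul_le_mul_of_nonneg_left hCS h2LJ
        _ = 0 := by rw [hV0, Real.sqrt_zero, mul_zero]
    · have hVpos : 0 < Var := lt_of_le_of_ne hVar0 (Ne.symm hV0)
      have hsqrt : Real.sqrt Var ≤ 2 * M ^ ((1:ℝ)/3) * Var ^ ((1:ℝ)/3) := by
        rw [Real.sqrt_eq_rpow]
        have hsplit : Var ^ ((1:ℝ)/2) = Var ^ ((1:ℝ)/6) * Var ^ ((1:ℝ)/3) := by
          rw [← Real.rpow_add hVpos]; norm_num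
        rw [hsplit]
        have h6 : Var ^ ((1:ℝ)/6) ≤ (4 * M ^ 2) ^ ((1:ℝ)/6) :=
          Real.rpow_le_rpow hVar0 hVle (by norm_num)
        have h7 : (4 * M ^ 2) ^ ((1:ℝ)/6) ≤ 2 * M ^ ((1:ℝ)/3) := by
          rw [Real.mul_rpow (by norm_num) (sq_nonneg M)]
          have h8 : ((4:ℝ)) ^ ((1:ℝ)/6) ≤ 2 := by
            have h9 : ((4:ℝ)) = (2:ℝ) ^ (2:ℝ) := by
              rw [show (2:ℝ) ^ (2:ℝ) = (2:ℝ) ^ (2:ℕ) by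
                rw [← Real.rpow_natCast 2 2]; norm_num]
              norm_num
            rw [h9, ← Real.rpow_mul (by norm_num : (0:ℝ) ≤ 2)]
            calc (2:ℝ) ^ (2 * ((1:ℝ)/6)) ≤ (2:ℝ) ^ (1:ℝ) :=
                Real.rpow_le_rpow_of_exponent_le (by norm_num) (by norm_num)
              _ = 2 := Real.rpow_one 2
          have h10 : (M ^ 2) ^ ((1:ℝ)/6) = M ^ ((1:ℝ)/3) := by
            rw [← Real.rpow_natCast M 2, ← Real.rpow_mul (le_of_lt hMpos)]
            norm_num
          rw [h10]
          exact mul_le_mul_of_nonneg_right h8 (Real.rpow_nonneg (le_of_lt hMpos) _)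
        calc Var ^ ((1:ℝ)/6) * Var ^ ((1:ℝ)/3)
            ≤ (4 * M ^ 2) ^ ((1:ℝ)/6) * Var ^ ((1:ℝ)/3) :=
              mul_le_mul_of_nonneg_right h6 (Real.rpow_nonneg hVar0 _)
          _ ≤ (2 * M ^ ((1:ℝ)/3)) * Var ^ ((1:ℝ)/3) :=
              mul_le_mul_of_nonneg_right h7 (Real.rpow_nonneg hVar0 _)
      have hchain : (2 * (L:ℝ) * J) * ∑ y : Fin L → V, softmaxPolicy f θ x y * |rKL y θ - φx θ|
          ≤ (2 * (L:ℝ) * J) * (2 * M ^ ((1:ℝ)/3) * Var ^ ((1:ℝ)/3)) :=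
        mul_le_mul_of_nonneg_left (le_trans hCS hsqrt) h2LJ
      refine le_trans hchain ?_
      have hL0 : (0:ℝ) ≤ (L:ℝ) := Nat.cast_nonneg L
      have ha : (0:ℝ) ≤ M ^ ((1:ℝ)/3) := Real.rpow_nonneg (le_of_lt hMpos) _
      have hb : (0:ℝ) ≤ Var ^ ((1:ℝ)/3) := Real.rpow_nonneg hVar0 _
      nlinarith [mul_nonneg (mul_nonneg (mul_nonneg hL0 hJ0) ha) hb]
end

section
/- For a tabular policy π_θ, any prompt x ∈ X, reward model r_RM, reference parameter θ_ref, and λ ≥ 0, the ℓ¹ norm of the gradient with respect to the column θ_{:,x} of the per-prompt objective φ(θ;x) = Σ_{y∈Y} π_θ(y|x) r^KL(x,y;θ) is at most the square root of the variance of the KL-regularized reward: ‖∇_{θ_{:,x}} φ(θ;x)‖₁ ≤ √(Var_{y∼π_θ(·|x)}[r^KL(x,y;θ)]). -/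
/-- Softmax distribution over outputs given a column of logits. -/
noncomputable def tabPol {Y : Type*} [Fintype Y] (u : EuclideanSpace ℝ Y) (y : Y) : ℝ :=
  Real.exp (u y) / ∑ y' : Y, Real.exp (u y')

lemma sumExp_pos {Y : Type*} [Fintype Y] [Nonempty Y] (u : EuclideanSpace ℝ Y) :
    0 < ∑ y : Y, Real.exp (u y) :=
  Finset.sum_pos (fun y _ => Real.exp_pos _) Finset.univ_nonempty

lemma tabPol_pos {Y : Type*} [Fintype Y] [Nonempty Y] (u : EuclideanSpace ℝ Y) (y : Y) :
    0 < tabPol u y := div_pos (Real.exp_pos _) (sumExp_pos u)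

lemma sum_tabPol {Y : Type*} [Fintype Y] [Nonempty Y] (u : EuclideanSpace ℝ Y) :
    ∑ y : Y, tabPol u y = 1 := by
  simp only [tabPol, ← Finset.sum_div]
  exact div_self (sumExp_pos u).ne'

lemma proj_exp_hasFDerivAt {Y : Type*} [Fintype Y] (v : EuclideanSpace ℝ Y) (y : Y) :
    HasFDerivAt (fun u : EuclideanSpace ℝ Y => Real.exp (u y))
      (Real.exp (v y) • (EuclideanSpace.proj y : EuclideanSpace ℝ Y →L[ℝ] ℝ)) v :=
  by
  have h := (EuclideanSpace.proj (𝕜 := ℝ) (ι := Y) y).hasFDerivAt (x := v)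
  exact h.exp

noncomputable def tabDp {Y : Type*} [Fintype Y] (v : EuclideanSpace ℝ Y) (y : Y) :
    EuclideanSpace ℝ Y →L[ℝ] ℝ :=
  tabPol v y • (EuclideanSpace.proj y : EuclideanSpace ℝ Y →L[ℝ] ℝ)
    - tabPol v y • ∑ y' : Y, tabPol v y' • (EuclideanSpace.proj y' : EuclideanSpace ℝ Y →L[ℝ] ℝ)

lemma tabDp_apply {Y : Type*} [Fintype Y] (v : EuclideanSpace ℝ Y) (y : Y)
    (w : EuclideanSpace ℝ Y) :
    tabDp v y w = tabPol v y * w y - tabPol v y * ∑ y' : Y, tabPol v y' * w y' := by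
  simp [tabDp, ContinuousLinearMap.sum_apply]

lemma tabPol_hasFDerivAt {Y : Type*} [Fintype Y] [Nonempty Y] (v : EuclideanSpace ℝ Y) (y : Y) :
    HasFDerivAt (fun u => tabPol u y) (tabDp v y) v := by
  have hS : HasFDerivAt (fun u : EuclideanSpace ℝ Y => ∑ y' : Y, Real.exp (u y'))
      (∑ y' : Y, Real.exp (v y') • (EuclideanSpace.proj y' : EuclideanSpace ℝ Y →L[ℝ] ℝ)) v :=
    HasFDerivAt.fun_sum (fun y' _ => proj_exp_hasFDerivAt v y')
  have hinv := (hasDerivAt_inv (sumExp_pos v).ne').comp_hasFDerivAt v hS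
  have h := (proj_exp_hasFDerivAt v y).fun_mul hinv
  have heq : (fun u : EuclideanSpace ℝ Y => Real.exp (u y) * (∑ y' : Y, Real.exp (u y'))⁻¹)
      = fun u => tabPol u y := by
    funext u; rw [tabPol, div_eq_mul_inv]
  simp only [Function.comp] at h
  rw [heq] at h
  refine h.congr_fderiv (Eq.symm ?_)
  ext w
  simp only [tabDp_apply, ContinuousLinearMap.add_apply, ContinuousLinearMap.smul_apply,
    ContinuousLinearMap.sum_apply, PiLp.proj_apply, smul_eq_mul, tabPol]
  have hs : ∑ x : Y, (Real.exp (v x) / ∑ y' : Y, Real.exp (v y')) * w x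
      = (∑ x : Y, Real.exp (v x) * w x) / ∑ y' : Y, Real.exp (v y') := by
    rw [Finset.sum_div]
    exact Finset.sum_congr rfl fun x _ => (div_mul_eq_mul_div _ _ _)
  rw [hs]
  have hS0 : (∑ y' : Y, Real.exp (v y')) ≠ 0 := (sumExp_pos v).ne'
  field_simp
  ring

lemma tabF_hasFDerivAt {Y : Type*} [Fintype Y] [Nonempty Y] (c : Y → ℝ) (lam : ℝ)
    (v : EuclideanSpace ℝ Y) (y : Y) :
    HasFDerivAt (fun u : EuclideanSpace ℝ Y => tabPol u y * (c y - lam * Real.log (tabPol u y)))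
      ((c y - lam * Real.log (tabPol v y) - lam) • tabDp v y) v := by
  have hp := tabPol_hasFDerivAt v y
  have hlog := hp.log (tabPol_pos v y).ne'
  have h2 := (hasFDerivAt_const (c y) v).sub (hlog.const_mul lam)
  have h := hp.fun_mul h2
  refine h.congr_fderiv (Eq.symm ?_)
  ext w
  simp only [ContinuousLinearMap.add_apply, ContinuousLinearMap.smul_apply,
    ContinuousLinearMap.sub_apply, ContinuousLinearMap.zero_apply, smul_eq_mul,
    ContinuousLinearMap.coe_smul', Pi.smul_apply, Pi.sub_apply]
  have hp0 : tabPol v y ≠ 0 := (tabPol_pos v y).ne'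
  field_simp
  ring

lemma tab_hasGradientAt {Y : Type*} [Fintype Y] [Nonempty Y] (c : Y → ℝ) (lam : ℝ)
    (v : EuclideanSpace ℝ Y) :
    HasGradientAt (fun u : EuclideanSpace ℝ Y =>
        ∑ y : Y, tabPol u y * (c y - lam * Real.log (tabPol u y)))
      (WithLp.toLp 2 (fun z => tabPol v z * ((c z - lam * Real.log (tabPol v z)) -
          ∑ y : Y, tabPol v y * (c y - lam * Real.log (tabPol v y)))) : EuclideanSpace ℝ Y) v := by
  have h := HasFDerivAt.fun_sum (fun y (_ : y ∈ (Finset.univ : Finset Y)) => tabF_hasFDerivAt c lam v y)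
  rw [hasGradientAt_iff_hasFDerivAt]
  refine h.congr_fderiv (Eq.symm ?_)
  ext w
  rw [InnerProductSpace.toDual_apply_apply]
  simp only [ContinuousLinearMap.sum_apply, ContinuousLinearMap.smul_apply, tabDp_apply,
    smul_eq_mul, PiLp.inner_apply, RCLike.inner_apply, conj_trivial]
  set p := fun z => tabPol v z with hp
  set r := fun z => c z - lam * Real.log (p z) with hr
  set R := ∑ y : Y, p y * r y with hR
  set T := ∑ y : Y, p y * w y with hT
  have hsum1 : ∑ y : Y, p y = 1 := sum_tabPol v
  rw [← sub_eq_zero, ← Finset.sum_sub_distrib]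
  have key : ∀ z : Y, p z * (r z - ∑ y : Y, p y * r y) * w z
      - (r z - lam) * (p z * w z - p z * ∑ y : Y, p y * w y)
      = (lam - R) * (p z * w z) + (p z * r z - lam * p z) * T := by
    intro z
    rw [hR, hT]
    ring
  simp only [mul_comm (w _) _]
  calc (∑ z : Y, (p z * (r z - ∑ y : Y, p y * r y) * w z
        - (r z - lam) * (p z * w z - p z * ∑ y : Y, p y * w y)))
      = ∑ z : Y, ((lam - R) * (p z * w z) + (p z * r z - lam * p z) * T) :=
        Finset.sum_congr rfl fun z _ => key z
    _ = (lam - R) * T + (R - lam * 1) * T := by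
        rw [Finset.sum_add_distrib, ← Finset.mul_sum, ← Finset.sum_mul,
          Finset.sum_sub_distrib, ← Finset.mul_sum, ← hR, ← hT, hsum1]
    _ = 0 := by ring

lemma l1_var_bound {Y : Type*} [Fintype Y] (p d : Y → ℝ) (hp : ∀ y, 0 ≤ p y)
    (hs : ∑ y : Y, p y = 1) :
    ∑ y : Y, |p y * d y| ≤ Real.sqrt (∑ y : Y, p y * d y ^ 2) := by
  apply Real.le_sqrt_of_sq_le
  have h := Finset.sum_mul_sq_le_sq_mul_sq Finset.univ (fun y => Real.sqrt (p y))
    (fun y => Real.sqrt (p y) * |d y|)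
  calc (∑ y : Y, |p y * d y|) ^ 2
      = (∑ y : Y, Real.sqrt (p y) * (Real.sqrt (p y) * |d y|)) ^ 2 := by
        congr 1
        refine Finset.sum_congr rfl fun y _ => ?_
        rw [← mul_assoc, Real.mul_self_sqrt (hp y), abs_mul, abs_of_nonneg (hp y)]
    _ ≤ (∑ y : Y, Real.sqrt (p y) ^ 2) * ∑ y : Y, (Real.sqrt (p y) * |d y|) ^ 2 := h
    _ = ∑ y : Y, p y * d y ^ 2 := by
        have h1 : ∑ y : Y, Real.sqrt (p y) ^ 2 = 1 := by
          rw [← hs]; exact Finset.sum_congr rfl fun y _ => Real.sq_sqrt (hp y)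
        rw [h1, one_mul]
        refine Finset.sum_congr rfl fun y _ => ?_
        rw [mul_pow, Real.sq_sqrt (hp y), sq_abs]

/-- Lemma (ℓ¹ gradient bound for tabular policies): the ℓ¹ norm of the gradient of the
per-prompt objective `φ(θ;x) = Σ_y π_θ(y|x) r^KL(x,y;θ)` with respect to the column
`θ_{:,x}` is at most `√(Var_{y∼π_θ(·|x)}[r^KL(x,y;θ)])`. -/
theorem tabular_grad_l1_norm_bound_with_kl {X Y : Type*} [Fintype X] [Fintype Y]
    [DecidableEq X]
    (rRM : X → Y → ℝ) (hrRM : ∀ x y, rRM x y ∈ Set.Icc (-1 : ℝ) 1)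
    (lam : ℝ) (hlam : 0 ≤ lam)
    (θref θ : X → EuclideanSpace ℝ Y)
    (rKL : (X → EuclideanSpace ℝ Y) → X → Y → ℝ)
    (hrKL : ∀ ϑ x y, rKL ϑ x y =
      rRM x y - lam * Real.log (tabPol (ϑ x) y / tabPol (θref x) y))
    (φ : X → (X → EuclideanSpace ℝ Y) → ℝ)
    (hφ : ∀ x ϑ, φ x ϑ = ∑ y : Y, tabPol (ϑ x) y * rKL ϑ x y)
    (x : X) :
    ∑ y : Y, |gradient (fun u => φ x (Function.update θ x u)) (θ x) y| ≤
      Real.sqrt (∑ y : Y, tabPol (θ x) y * (rKL θ x y - φ x θ) ^ 2) := by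
  rcases isEmpty_or_nonempty Y with hY | hY
  · simp [Finset.univ_eq_empty, Real.sqrt_nonneg]
  set v := θ x with hv
  set q := θref x with hq
  set c : Y → ℝ := fun y => rRM x y + lam * Real.log (tabPol q y) with hc
  have hfun : (fun u => φ x (Function.update θ x u))
      = fun u : EuclideanSpace ℝ Y => ∑ y : Y, tabPol u y * (c y - lam * Real.log (tabPol u y)) := by
    funext u
    rw [hφ]
    refine Finset.sum_congr rfl fun y _ => ?_
    rw [hrKL]
    simp only [Function.update_self, hc]
    rw [Real.log_div (tabPol_pos u y).ne' (tabPol_pos q y).ne']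
    ring
  have hrKL' : ∀ y, rKL θ x y = c y - lam * Real.log (tabPol v y) := by
    intro y
    rw [hrKL, Real.log_div (tabPol_pos v y).ne' (tabPol_pos q y).ne', hc]
    ring
  have hφ' : φ x θ = ∑ y : Y, tabPol v y * (c y - lam * Real.log (tabPol v y)) := by
    rw [hφ]
    exact Finset.sum_congr rfl fun y _ => by rw [hrKL' y]
  have hg := tab_hasGradientAt c lam v
  rw [hfun, hg.gradient]
  have hgoal : ∀ y, rKL θ x y - φ x θ
      = (c y - lam * Real.log (tabPol v y)) - ∑ y' : Y, tabPol v y' * (c y' - lam * Real.log (tabPol v y')) := by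
    intro y; rw [hrKL' y, hφ']
  calc ∑ y : Y, |tabPol v y * ((c y - lam * Real.log (tabPol v y)) -
        ∑ y' : Y, tabPol v y' * (c y' - lam * Real.log (tabPol v y')))|
      ≤ Real.sqrt (∑ y : Y, tabPol v y * ((c y - lam * Real.log (tabPol v y)) -
        ∑ y' : Y, tabPol v y' * (c y' - lam * Real.log (tabPol v y'))) ^ 2) :=
        l1_var_bound _ _ (fun y => (tabPol_pos v y).le) (sum_tabPol v)
    _ = Real.sqrt (∑ y : Y, tabPol v y * (rKL θ x y - φ x θ) ^ 2) := by
        congr 1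
        exact Finset.sum_congr rfl fun y _ => by rw [hgoal y]
end

section
/- Suppose gradient flow over a tabular policy is used to maximize the RLHF objective φ over a training set S. Then for any prompt x ∈ S, output y ∈ Y, and time t ≥ 0: (d/dt)π_{θ(t)}(y|x) = (1/|S|) · π_{θ(t)}(y|x)² · (r_RM(x,y) − V_RM(t)) − (1/|S|) · π_{θ(t)}(y|x) · Σ_{y'∈Y} π_{θ(t)}(y'|x)² · (r_RM(x,y') − V_RM(t)) − (λ/|S|) · π_{θ(t)}(y|x)² · (ln(π_{θ(t)}(y|x)/π_{θ(0)}(y|x)) − K(t)) + (λ/|S|) · π_{θ(t)}(y|x) · Σ_{y'∈Y} π_{θ(t)}(y'|x)² · (ln(π_{θ(t)}(y'|x)/π_{θ(0)}(y'|x)) − K(t)), where V_RM(t) = Σ_{y'∈Y} π_{θ(t)}(y'|x) r_RM(x,y') and K(t) = KL(π_{θ(t)}(·|x) ‖ π_{θ(0)}(·|x)). -/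
/-- A tabular policy: `π_θ(y|x) = softmax(θ_{:,x})_y` for parameters `θ ∈ ℝ^{Y×X}`. -/
noncomputable def tabPolicy {X Y : Type*} [Fintype Y]
    (θ : EuclideanSpace ℝ (Y × X)) (x : X) (y : Y) : ℝ :=
  Real.exp (θ (y, x)) / ∑ y' : Y, Real.exp (θ (y', x))

/-- The RLHF objective for tabular policies. -/
noncomputable def rlhfObjTab {X Y : Type*} [Fintype X] [Fintype Y]
    (S : Finset X) (rRM : X → Y → ℝ) (lam : ℝ)
    (θref θ : EuclideanSpace ℝ (Y × X)) : ℝ :=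
  (S.card : ℝ)⁻¹ * ∑ x ∈ S,
    ((∑ y : Y, tabPolicy θ x y * rRM x y) -
      lam * ∑ y : Y, tabPolicy θ x y * Real.log (tabPolicy θ x y / tabPolicy θref x y))


open Finset

section aux
variable {X Y : Type*} [Fintype X] [Fintype Y] [Nonempty Y]

lemma denomPos (θ : EuclideanSpace ℝ (Y × X)) (x : X) :
    0 < ∑ y' : Y, Real.exp (θ (y', x)) :=
  Finset.sum_pos (fun _ _ => Real.exp_pos _) univ_nonempty

lemma tabPolicy_pos (θ : EuclideanSpace ℝ (Y × X)) (x : X) (y : Y) :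
    0 < tabPolicy θ x y :=
  div_pos (Real.exp_pos _) (denomPos θ x)

lemma tabPolicy_sum (θ : EuclideanSpace ℝ (Y × X)) (x : X) :
    ∑ y : Y, tabPolicy θ x y = 1 := by
  simp only [tabPolicy, ← Finset.sum_div]
  exact div_self (denomPos θ x).ne'

noncomputable def polD {X Y : Type*} [Fintype X] [Fintype Y] (θ : EuclideanSpace ℝ (Y × X)) (x : X) (y : Y) :
    EuclideanSpace ℝ (Y × X) →L[ℝ] ℝ :=
  tabPolicy θ x y • (EuclideanSpace.proj (y, x) -
    ∑ y' : Y, tabPolicy θ x y' • EuclideanSpace.proj (y', x))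

lemma polD_apply (θ : EuclideanSpace ℝ (Y × X)) (x : X) (y : Y)
    (v : EuclideanSpace ℝ (Y × X)) :
    polD θ x y v = tabPolicy θ x y * (v (y, x) - ∑ y' : Y, tabPolicy θ x y' * v (y', x)) := by
  simp [polD, ContinuousLinearMap.sum_apply, PiLp.proj_apply, smul_eq_mul]

lemma hasFDerivAt_tabPolicy (θ : EuclideanSpace ℝ (Y × X)) (x : X) (y : Y) :
    HasFDerivAt (fun θ' => tabPolicy θ' x y) (polD θ x y) θ := by
  have hproj : ∀ (p : Y × X), HasFDerivAt (fun θ' : EuclideanSpace ℝ (Y × X) => θ' p)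
      (EuclideanSpace.proj p : EuclideanSpace ℝ (Y × X) →L[ℝ] ℝ) θ := by
    intro p
    convert (EuclideanSpace.proj p : EuclideanSpace ℝ (Y × X) →L[ℝ] ℝ).hasFDerivAt using 1
    rfl
  have hnum : ∀ (y' : Y), HasFDerivAt (fun θ' : EuclideanSpace ℝ (Y × X) => Real.exp (θ' (y', x)))
      (Real.exp (θ (y', x)) • EuclideanSpace.proj (y', x)) θ := fun y' => (hproj (y', x)).exp
  have hD : HasFDerivAt (fun θ' : EuclideanSpace ℝ (Y × X) => ∑ y' : Y, Real.exp (θ' (y', x)))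
      (∑ y' : Y, Real.exp (θ (y', x)) • EuclideanSpace.proj (y', x)) θ :=
    HasFDerivAt.fun_sum (fun y' _ => hnum y')
  have hinv : HasFDerivAt (fun θ' : EuclideanSpace ℝ (Y × X) =>
      (∑ y' : Y, Real.exp (θ' (y', x)))⁻¹)
      ((-(((∑ y' : Y, Real.exp (θ (y', x))) ^ 2)⁻¹)) •
        (∑ y' : Y, Real.exp (θ (y', x)) • EuclideanSpace.proj (y', x))) θ :=
    (hasDerivAt_inv (denomPos θ x).ne').comp_hasFDerivAt θ hD
  have hmul := (hnum y).mul hinv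
  have heq : (fun θ' : EuclideanSpace ℝ (Y × X) => tabPolicy θ' x y) =
      fun θ' => Real.exp (θ' (y, x)) * (∑ y' : Y, Real.exp (θ' (y', x)))⁻¹ := by
    funext θ'; simp [tabPolicy, div_eq_mul_inv]
  rw [heq]
  refine hmul.congr_fderiv ?_
  symm
  ext v
  simp only [polD_apply, ContinuousLinearMap.add_apply, ContinuousLinearMap.smul_apply,
    ContinuousLinearMap.sum_apply, PiLp.proj_apply, smul_eq_mul, tabPolicy,
    ContinuousLinearMap.neg_apply]
  rw [Finset.mul_sum, Finset.mul_sum]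
  set D := ∑ y' : Y, Real.exp (θ (y', x)) with hDdef
  have hD0 : D ≠ 0 := (denomPos θ x).ne'
  have hL : ∑ x1 : Y, Real.exp (θ (x1, x)) / D * v (x1, x)
      = (∑ x1 : Y, Real.exp (θ (x1, x)) * v (x1, x)) / D := by
    rw [Finset.sum_div]; exact Finset.sum_congr rfl fun _ _ => by ring
  have hterm : ∀ i : Y, Real.exp (θ (y, x)) * (-(D ^ 2)⁻¹ * (Real.exp (θ (i, x)) * v (i, x)))
      = -(Real.exp (θ (y, x)) * (Real.exp (θ (i, x)) * v (i, x))) / D ^ 2 := fun i => by ring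
  have hR : ∑ i : Y, Real.exp (θ (y, x)) * (-(D ^ 2)⁻¹ * (Real.exp (θ (i, x)) * v (i, x)))
      = -(Real.exp (θ (y, x)) * (∑ i : Y, Real.exp (θ (i, x)) * v (i, x))) / D ^ 2 := by
    rw [Finset.sum_congr rfl fun i _ => hterm i, ← Finset.sum_div, Finset.sum_neg_distrib,
      ← Finset.mul_sum]
  rw [hL, hR]
  field_simp
  ring
end aux

section grad
variable {X Y : Type*} [Fintype X] [Fintype Y] [Nonempty Y] [DecidableEq X]

noncomputable def gradVec (S : Finset X) (rRM : X → Y → ℝ) (lam : ℝ)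
    (θref θ : EuclideanSpace ℝ (Y × X)) : EuclideanSpace ℝ (Y × X) :=
  (WithLp.equiv 2 ((_ : Y × X) → ℝ)).symm (fun p : Y × X =>
    if p.2 ∈ S then
      (S.card : ℝ)⁻¹ * (tabPolicy θ p.2 p.1 *
        ((rRM p.2 p.1 - ∑ y' : Y, tabPolicy θ p.2 y' * rRM p.2 y') -
          lam * (Real.log (tabPolicy θ p.2 p.1 / tabPolicy θref p.2 p.1) -
            ∑ y' : Y, tabPolicy θ p.2 y' *
              Real.log (tabPolicy θ p.2 y' / tabPolicy θref p.2 y'))))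
    else 0)

lemma gradVec_apply (S : Finset X) (rRM : X → Y → ℝ) (lam : ℝ)
    (θref θ : EuclideanSpace ℝ (Y × X)) (p : Y × X) :
    gradVec S rRM lam θref θ p =
    if p.2 ∈ S then
      (S.card : ℝ)⁻¹ * (tabPolicy θ p.2 p.1 *
        ((rRM p.2 p.1 - ∑ y' : Y, tabPolicy θ p.2 y' * rRM p.2 y') -
          lam * (Real.log (tabPolicy θ p.2 p.1 / tabPolicy θref p.2 p.1) -
            ∑ y' : Y, tabPolicy θ p.2 y' *
              Real.log (tabPolicy θ p.2 y' / tabPolicy θref p.2 y'))))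
    else 0 := rfl

-- key algebra
lemma key_alg (π r lr w : Y → ℝ) (hsum : ∑ y : Y, π y = 1) (lam : ℝ) :
    (∑ y : Y, r y * (π y * (w y - ∑ y'' : Y, π y'' * w y''))) -
      lam * ∑ y : Y, (lr y + 1) * (π y * (w y - ∑ y'' : Y, π y'' * w y'')) =
    ∑ y : Y, (π y * ((r y - ∑ y' : Y, π y' * r y') -
      lam * (lr y - ∑ y' : Y, π y' * lr y'))) * w y := by
  have h1 : ∀ y : Y, r y * (π y * (w y - ∑ y'' : Y, π y'' * w y''))
      = r y * π y * w y - r y * π y * ∑ y'' : Y, π y'' * w y'' := fun y => by ring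
  have h2 : ∀ y : Y, (lr y + 1) * (π y * (w y - ∑ y'' : Y, π y'' * w y''))
      = (lr y + 1) * π y * w y - (lr y + 1) * π y * ∑ y'' : Y, π y'' * w y'' := fun y => by ring
  rw [Finset.sum_congr rfl fun y _ => h1 y, Finset.sum_congr rfl fun y _ => h2 y,
    Finset.sum_sub_distrib, Finset.sum_sub_distrib, ← Finset.sum_mul, ← Finset.sum_mul]
  have h3 : ∑ y : Y, (lr y + 1) * π y = (∑ y : Y, π y * lr y) + 1 := by
    have : ∀ y : Y, (lr y + 1) * π y = π y * lr y + π y := fun y => by ring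
    rw [Finset.sum_congr rfl fun y _ => this y, Finset.sum_add_distrib, hsum]
  have h4 : ∑ y : Y, r y * π y = ∑ y : Y, π y * r y :=
    Finset.sum_congr rfl fun y _ => by ring
  rw [h3, h4]
  have h5 : ∀ y : Y, (π y * ((r y - ∑ y' : Y, π y' * r y') -
      lam * (lr y - ∑ y' : Y, π y' * lr y'))) * w y
      = (r y * π y * w y - lam * ((lr y + 1) * π y * w y))
        - ((∑ y' : Y, π y' * r y') - lam * ((∑ y' : Y, π y' * lr y') + 1)) * (π y * w y) :=
    fun y => by ring
  rw [Finset.sum_congr rfl fun y _ => h5 y, Finset.sum_sub_distrib, Finset.sum_sub_distrib,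
    ← Finset.mul_sum, ← Finset.mul_sum]
  ring

end grad

section gradmain
variable {X Y : Type*} [Fintype X] [Fintype Y] [Nonempty Y] [DecidableEq X]

lemma hasGradientAt_rlhf (S : Finset X) (rRM : X → Y → ℝ) (lam : ℝ)
    (θref θ : EuclideanSpace ℝ (Y × X)) :
    HasGradientAt (rlhfObjTab S rRM lam θref) (gradVec S rRM lam θref θ) θ := by
  rw [hasGradientAt_iff_hasFDerivAt]
  have hA : ∀ x' : X, HasFDerivAt
      (fun θ' : EuclideanSpace ℝ (Y × X) => ∑ y : Y, tabPolicy θ' x' y * rRM x' y)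
      (∑ y : Y, rRM x' y • polD θ x' y) θ :=
    fun x' => HasFDerivAt.fun_sum fun y _ => (hasFDerivAt_tabPolicy θ x' y).mul_const _
  have hB : ∀ x' : X, HasFDerivAt
      (fun θ' : EuclideanSpace ℝ (Y × X) =>
        ∑ y : Y, tabPolicy θ' x' y * Real.log (tabPolicy θ' x' y / tabPolicy θref x' y))
      (∑ y : Y, (Real.log (tabPolicy θ x' y / tabPolicy θref x' y) + 1) • polD θ x' y) θ := by
    intro x'
    apply HasFDerivAt.fun_sum
    intro y _
    have hp := hasFDerivAt_tabPolicy θ x' y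
    have hpos := tabPolicy_pos θ x' y
    have hlog : HasFDerivAt
        (fun θ' : EuclideanSpace ℝ (Y × X) =>
          Real.log (tabPolicy θ' x' y / tabPolicy θref x' y))
        ((tabPolicy θ x' y)⁻¹ • polD θ x' y) θ := by
      have heq : (fun θ' : EuclideanSpace ℝ (Y × X) =>
          Real.log (tabPolicy θ' x' y / tabPolicy θref x' y))
          = fun θ' => Real.log (tabPolicy θ' x' y) - Real.log (tabPolicy θref x' y) := by
        funext θ'
        rw [Real.log_div (tabPolicy_pos θ' x' y).ne' (tabPolicy_pos θref x' y).ne']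
      rw [heq]
      exact (hp.log hpos.ne').sub_const _
    have hm := hp.mul hlog
    refine hm.congr_fderiv ?_
    symm
    rw [smul_smul, mul_inv_cancel₀ hpos.ne', add_smul, one_smul, add_comm]
  have hterm : ∀ x' ∈ S, HasFDerivAt
      (fun θ' : EuclideanSpace ℝ (Y × X) =>
        (∑ y : Y, tabPolicy θ' x' y * rRM x' y) -
          lam * ∑ y : Y, tabPolicy θ' x' y * Real.log (tabPolicy θ' x' y / tabPolicy θref x' y))
      ((∑ y : Y, rRM x' y • polD θ x' y) -
        lam • ∑ y : Y, (Real.log (tabPolicy θ x' y / tabPolicy θref x' y) + 1) • polD θ x' y)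
      θ := fun x' _ => (hA x').sub ((hB x').const_mul lam)
  have hfull := (HasFDerivAt.fun_sum hterm).const_mul ((S.card : ℝ)⁻¹)
  have hobj : rlhfObjTab S rRM lam θref = fun θ' : EuclideanSpace ℝ (Y × X) =>
      (S.card : ℝ)⁻¹ * ∑ x' ∈ S,
        ((∑ y : Y, tabPolicy θ' x' y * rRM x' y) -
          lam * ∑ y : Y, tabPolicy θ' x' y *
            Real.log (tabPolicy θ' x' y / tabPolicy θref x' y)) := rfl
  rw [hobj]
  refine hfull.congr_fderiv ?_
  symm
  ext v
  simp only [InnerProductSpace.toDual_apply_apply, PiLp.inner_apply, RCLike.inner_apply,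
    conj_trivial, ContinuousLinearMap.smul_apply, ContinuousLinearMap.sum_apply,
    ContinuousLinearMap.sub_apply, polD_apply, smul_eq_mul, gradVec_apply]
  rw [Fintype.sum_prod_type]
  simp only [mul_comm (v.ofLp _)]
  simp only [ite_mul, zero_mul]
  rw [Finset.sum_comm]
  have hvanish : ∀ x' ∈ Finset.univ (α := X), x' ∉ S →
      (∑ y : Y, if x' ∈ S then
        (S.card : ℝ)⁻¹ * (tabPolicy θ x' y *
          ((rRM x' y - ∑ y' : Y, tabPolicy θ x' y' * rRM x' y') -
            lam * (Real.log (tabPolicy θ x' y / tabPolicy θref x' y) -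
              ∑ y' : Y, tabPolicy θ x' y' *
                Real.log (tabPolicy θ x' y' / tabPolicy θref x' y')))) * v (y, x')
        else 0) = 0 := by
    intro x' _ hx'
    simp [hx']
  rw [← Finset.sum_subset (Finset.subset_univ S) hvanish, Finset.mul_sum]
  refine Finset.sum_congr rfl fun x' hx' => ?_
  simp only [if_pos hx']
  rw [key_alg (tabPolicy θ x') (rRM x')
      (fun y => Real.log (tabPolicy θ x' y / tabPolicy θref x' y))
      (fun y => v (y, x')) (tabPolicy_sum θ x') lam, Finset.mul_sum]
  exact Finset.sum_congr rfl fun y _ => by ring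

end gradmain

/-- Lemma (time derivative of policy probabilities under gradient flow): for a tabular
policy trained via gradient flow on the RLHF objective, for `x ∈ S`, `y ∈ Y`, `t ≥ 0`,
the derivative of `t ↦ π_{θ(t)}(y|x)` equals the claimed expression involving the reward
model, the expected reward `V_RM(t)` and the KL divergence `K(t)`. -/
theorem kl_prob_time_deriv {X Y : Type*} [Fintype X] [Fintype Y]
    (rRM : X → Y → ℝ) (hrRM : ∀ x y, rRM x y ∈ Set.Icc (-1 : ℝ) 1)
    (lam : ℝ) (hlam : 0 ≤ lam)
    (S : Finset X) (hS : S.Nonempty)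
    (θref : EuclideanSpace ℝ (Y × X))
    (θ : ℝ → EuclideanSpace ℝ (Y × X)) (hθ0 : θ 0 = θref)
    (hflow : ∀ t : ℝ, 0 ≤ t →
      HasDerivAt θ (gradient (rlhfObjTab S rRM lam θref) (θ t)) t)
    (x : X) (hx : x ∈ S) (y : Y) (t : ℝ) (ht : 0 ≤ t)
    (VRM : ℝ) (hVRM : VRM = ∑ y' : Y, tabPolicy (θ t) x y' * rRM x y')
    (K : ℝ) (hK : K = ∑ y' : Y, tabPolicy (θ t) x y' *
      Real.log (tabPolicy (θ t) x y' / tabPolicy (θ 0) x y')) :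
    HasDerivAt (fun s => tabPolicy (θ s) x y)
      ((S.card : ℝ)⁻¹ * tabPolicy (θ t) x y ^ 2 * (rRM x y - VRM)
        - (S.card : ℝ)⁻¹ * tabPolicy (θ t) x y *
            ∑ y' : Y, tabPolicy (θ t) x y' ^ 2 * (rRM x y' - VRM)
        - lam / (S.card : ℝ) * tabPolicy (θ t) x y ^ 2 *
            (Real.log (tabPolicy (θ t) x y / tabPolicy (θ 0) x y) - K)
        + lam / (S.card : ℝ) * tabPolicy (θ t) x y *
            ∑ y' : Y, tabPolicy (θ t) x y' ^ 2 *
              (Real.log (tabPolicy (θ t) x y' / tabPolicy (θ 0) x y') - K)) t := by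
  classical
  have _ : Nonempty Y := ⟨y⟩
  subst hVRM
  subst hK
  have hgrad := hasGradientAt_rlhf S rRM lam θref (θ t)
  have hgeq : gradient (rlhfObjTab S rRM lam θref) (θ t) = gradVec S rRM lam θref (θ t) :=
    hgrad.gradient
  have hd := hflow t ht
  rw [hgeq] at hd
  have hF := hasFDerivAt_tabPolicy (θ t) x y
  have hcomp : HasDerivAt (fun s => tabPolicy (θ s) x y)
      (polD (θ t) x y (gradVec S rRM lam θref (θ t))) t := hF.comp_hasDerivAt t hd
  rw [hθ0]
  convert hcomp using 1
  rw [polD_apply]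
  have happ : ∀ y' : Y, gradVec S rRM lam θref (θ t) (y', x) =
      (S.card : ℝ)⁻¹ * (tabPolicy (θ t) x y' *
        ((rRM x y' - ∑ y'' : Y, tabPolicy (θ t) x y'' * rRM x y'') -
          lam * (Real.log (tabPolicy (θ t) x y' / tabPolicy θref x y') -
            ∑ y'' : Y, tabPolicy (θ t) x y'' *
              Real.log (tabPolicy (θ t) x y'' / tabPolicy θref x y'')))) := by
    intro y'
    rw [gradVec_apply]
    simp [hx]
  simp only [happ]
  have hsplit : ∑ y'' : Y, tabPolicy (θ t) x y'' * ((S.card : ℝ)⁻¹ * (tabPolicy (θ t) x y'' *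
      ((rRM x y'' - ∑ y3 : Y, tabPolicy (θ t) x y3 * rRM x y3) -
        lam * (Real.log (tabPolicy (θ t) x y'' / tabPolicy θref x y'') -
          ∑ y3 : Y, tabPolicy (θ t) x y3 *
            Real.log (tabPolicy (θ t) x y3 / tabPolicy θref x y3)))))
      = (S.card : ℝ)⁻¹ * ∑ y'' : Y, tabPolicy (θ t) x y'' ^ 2 *
          (rRM x y'' - ∑ y3 : Y, tabPolicy (θ t) x y3 * rRM x y3)
        - lam * (S.card : ℝ)⁻¹ * ∑ y'' : Y, tabPolicy (θ t) x y'' ^ 2 *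
          (Real.log (tabPolicy (θ t) x y'' / tabPolicy θref x y'') -
            ∑ y3 : Y, tabPolicy (θ t) x y3 *
              Real.log (tabPolicy (θ t) x y3 / tabPolicy θref x y3)) := by
    rw [Finset.mul_sum, Finset.mul_sum, ← Finset.sum_sub_distrib]
    refine Finset.sum_congr rfl fun y'' _ => ?_
    ring
  rw [hsplit]
  ring
end

section
/- Suppose gradient flow over a tabular policy is used to maximize the RLHF objective φ over a training set S. Then for any prompt x ∈ S, any subset of outputs A ⊆ Y, and any time T ≥ 0: π_{θ(T)}(A|x) ≤ π_{θ(0)}(A|x) · exp( (1/|S|) · (4 + 2λ · ln(1 / min_{y∈Y} π_{θ(0)}(y|x))) · T ), where π_θ(A|x) = Σ_{y∈A} π_θ(y|x). -/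
namespace KLB
variable {X Y : Type*} [Fintype X] [Fintype Y] [Nonempty Y]

lemma Zpos (θ : EuclideanSpace ℝ (Y × X)) (x : X) :
    0 < ∑ y' : Y, Real.exp (θ (y', x)) :=
  Finset.sum_pos (fun _ _ => Real.exp_pos _) Finset.univ_nonempty

lemma tab_pos (θ : EuclideanSpace ℝ (Y × X)) (x : X) (y : Y) : 0 < tabPolicy θ x y :=
  div_pos (Real.exp_pos _) (Zpos θ x)

lemma tab_sum (θ : EuclideanSpace ℝ (Y × X)) (x : X) : ∑ y : Y, tabPolicy θ x y = 1 := by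
  unfold tabPolicy
  rw [← Finset.sum_div, div_self (Zpos θ x).ne']

lemma tab_le_one (θ : EuclideanSpace ℝ (Y × X)) (x : X) (y : Y) : tabPolicy θ x y ≤ 1 := by
  have h := Finset.single_le_sum (f := fun y' => tabPolicy θ x y') (fun i _ => (tab_pos θ x i).le)
    (Finset.mem_univ y)
  rwa [tab_sum θ x] at h

/-- coordinate projection -/
noncomputable def Pj (i : Y × X) : EuclideanSpace ℝ (Y × X) →L[ℝ] ℝ := EuclideanSpace.proj i

lemma Pj_apply (i : Y × X) (v : EuclideanSpace ℝ (Y × X)) : Pj i v = v i := rfl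

/-- derivative CLM of `θ ↦ tabPolicy θ x y`. -/
noncomputable def dTab (x : X) (y : Y) (θ : EuclideanSpace ℝ (Y × X)) :
    EuclideanSpace ℝ (Y × X) →L[ℝ] ℝ :=
  tabPolicy θ x y •
    (Pj (y, x) - ∑ y' : Y, tabPolicy θ x y' • Pj (y', x))

lemma dTab_apply (x : X) (y : Y) (θ v : EuclideanSpace ℝ (Y × X)) :
    dTab x y θ v = tabPolicy θ x y * (v (y, x) - ∑ y' : Y, tabPolicy θ x y' * v (y', x)) := by
  simp [dTab, Pj_apply, smul_eq_mul]

lemma hasFDerivAt_coord (i : Y × X) (θ : EuclideanSpace ℝ (Y × X)) :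
    HasFDerivAt (fun θ' : EuclideanSpace ℝ (Y × X) => θ' i)
      (Pj i) θ :=
  (Pj i).hasFDerivAt

lemma hasFDerivAt_tab (x : X) (y : Y) (θ : EuclideanSpace ℝ (Y × X)) :
    HasFDerivAt (𝕜 := ℝ) (fun θ' => tabPolicy θ' x y) (dTab x y θ) θ := by
  have hZ : HasFDerivAt (fun θ' : EuclideanSpace ℝ (Y × X) => ∑ y' : Y, Real.exp (θ' (y', x)))
      (∑ y' : Y, Real.exp (θ (y', x)) • Pj (y', x)) θ := by
    apply HasFDerivAt.fun_sum
    intro y' _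
    exact (Real.hasDerivAt_exp (θ (y', x))).comp_hasFDerivAt θ (hasFDerivAt_coord (y', x) θ)
  have hN : HasFDerivAt (fun θ' : EuclideanSpace ℝ (Y × X) => Real.exp (θ' (y, x)))
      (Real.exp (θ (y, x)) • Pj (y, x)) θ := by
    exact (Real.hasDerivAt_exp (θ (y, x))).comp_hasFDerivAt θ (hasFDerivAt_coord (y, x) θ)
  have hinv : HasFDerivAt (fun θ' : EuclideanSpace ℝ (Y × X) =>
      (∑ y' : Y, Real.exp (θ' (y', x)))⁻¹)
      ((-(∑ y' : Y, Real.exp (θ (y', x)))⁻¹ ^ 2) •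
        (∑ y' : Y, Real.exp (θ (y', x)) • Pj (y', x))) θ := by
    have := (hasDerivAt_inv (Zpos θ x).ne').comp_hasFDerivAt θ hZ
    rw [show -(∑ y' : Y, Real.exp (θ (y', x)))⁻¹ ^ 2 = -((∑ y' : Y, Real.exp (θ (y', x))) ^ 2)⁻¹ by ring]
    exact this
  have hmul := hN.mul hinv
  have heq : (fun θ' : EuclideanSpace ℝ (Y × X) => tabPolicy θ' x y) =
      fun θ' => Real.exp (θ' (y, x)) * (∑ y' : Y, Real.exp (θ' (y', x)))⁻¹ := by
    funext θ'
    rw [tabPolicy, div_eq_mul_inv]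
  rw [heq]
  refine hmul.congr_fderiv ?_
  have hZne := (Zpos θ x).ne'
  ext v
  simp only [ContinuousLinearMap.add_apply, ContinuousLinearMap.smul_apply,
    ContinuousLinearMap.sum_apply, dTab, ContinuousLinearMap.sub_apply, Pj_apply,
    smul_eq_mul, Finset.mul_sum, tabPolicy]
  simp only [← Finset.mul_sum, div_mul_eq_mul_div, ← Finset.sum_div]
  field_simp
  ring

/-- the "advantage-like" score `g̃`. -/
noncomputable def gt (rRM : X → Y → ℝ) (lam : ℝ) (θref θ : EuclideanSpace ℝ (Y × X))
    (x : X) (y : Y) : ℝ :=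
  rRM x y - lam * (Real.log (tabPolicy θ x y / tabPolicy θref x y) + 1)

open scoped Classical in
/-- explicit gradient of the RLHF objective. -/
noncomputable def gradFn (S : Finset X) (rRM : X → Y → ℝ) (lam : ℝ)
    (θref θ : EuclideanSpace ℝ (Y × X)) : EuclideanSpace ℝ (Y × X) :=
  WithLp.toLp 2 fun i : Y × X => if i.2 ∈ S then
    (S.card : ℝ)⁻¹ * (tabPolicy θ i.2 i.1 *
      (gt rRM lam θref θ i.2 i.1 - ∑ y' : Y, tabPolicy θ i.2 y' * gt rRM lam θref θ i.2 y'))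
  else 0

lemma hasGradientAt_obj (S : Finset X) (rRM : X → Y → ℝ) (lam : ℝ)
    (θref θ : EuclideanSpace ℝ (Y × X)) :
    HasGradientAt (rlhfObjTab S rRM lam θref) (gradFn S rRM lam θref θ) θ := by
  rw [hasGradientAt_iff_hasFDerivAt]
  have main : HasFDerivAt (rlhfObjTab S rRM lam θref)
      ((S.card : ℝ)⁻¹ • ∑ x ∈ S, ∑ y : Y, gt rRM lam θref θ x y • dTab x y θ) θ := by
    unfold rlhfObjTab
    refine HasFDerivAt.const_mul ?_ _
    refine HasFDerivAt.fun_sum fun x _ => ?_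
    have h1 : HasFDerivAt (fun θ' => ∑ y : Y, tabPolicy θ' x y * rRM x y)
        (∑ y : Y, rRM x y • dTab x y θ) θ :=
      HasFDerivAt.fun_sum fun y _ => (hasFDerivAt_tab x y θ).mul_const (rRM x y)
    have h2 : HasFDerivAt
        (fun θ' => ∑ y : Y, tabPolicy θ' x y * Real.log (tabPolicy θ' x y / tabPolicy θref x y))
        (∑ y : Y, (Real.log (tabPolicy θ x y / tabPolicy θref x y) + 1) • dTab x y θ) θ := by
      refine HasFDerivAt.fun_sum fun y _ => ?_
      have hlog : HasDerivAt (fun u : ℝ => u * Real.log (u / tabPolicy θref x y))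
          (Real.log (tabPolicy θ x y / tabPolicy θref x y) + 1) (tabPolicy θ x y) := by
        have hq := tab_pos θref x y
        have hu := tab_pos θ x y
        have h1 : HasDerivAt (fun u : ℝ => u / tabPolicy θref x y) (1 / tabPolicy θref x y)
            (tabPolicy θ x y) := (hasDerivAt_id _).div_const _
        have h2 := (Real.hasDerivAt_log (div_pos hu hq).ne').comp (tabPolicy θ x y) h1
        have h3 := (hasDerivAt_id (tabPolicy θ x y)).mul h2
        refine h3.congr_deriv ?_
        simp only [Function.comp, id_eq]
        field_simp
      exact hlog.comp_hasFDerivAt θ (hasFDerivAt_tab x y θ)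
    have := h1.sub (h2.const_mul lam)
    refine this.congr_fderiv ?_
    rw [Finset.smul_sum, ← Finset.sum_sub_distrib]
    refine Finset.sum_congr rfl fun y _ => ?_
    rw [smul_smul, ← sub_smul]
    rfl
  refine main.congr_fderiv ?_
  ext v
  have hout : ∀ x : X, x ∉ S → ∑ y : Y, gradFn S rRM lam θref θ (y, x) * v (y, x) = 0 := by
    intro x hx
    refine Finset.sum_eq_zero fun y _ => ?_
    simp [gradFn, hx]
  calc ((S.card : ℝ)⁻¹ • ∑ x ∈ S, ∑ y : Y, gt rRM lam θref θ x y • dTab x y θ) v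
      = ∑ x ∈ S, ∑ y : Y, gradFn S rRM lam θref θ (y, x) * v (y, x) := by
        simp only [ContinuousLinearMap.smul_apply, ContinuousLinearMap.sum_apply, dTab_apply,
          smul_eq_mul]
        rw [Finset.mul_sum]
        refine Finset.sum_congr rfl fun x hx => ?_
        simp only [gradFn, hx, if_pos]
        have l2 : ∑ y : Y, gt rRM lam θref θ x y *
              (tabPolicy θ x y * (∑ y' : Y, tabPolicy θ x y' * v (y', x)))
            = (∑ y : Y, tabPolicy θ x y * gt rRM lam θref θ x y) *
              (∑ y' : Y, tabPolicy θ x y' * v (y', x)) := by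
          rw [Finset.sum_mul]
          exact Finset.sum_congr rfl fun y _ => by ring
        have r2 : ∑ y : Y, (tabPolicy θ x y *
              (∑ y' : Y, tabPolicy θ x y' * gt rRM lam θref θ x y')) * v (y, x)
            = (∑ y' : Y, tabPolicy θ x y' * gt rRM lam θref θ x y') *
              (∑ y : Y, tabPolicy θ x y * v (y, x)) := by
          rw [Finset.mul_sum]
          exact Finset.sum_congr rfl fun y _ => by ring
        have r1 : ∑ y : Y, ((S.card : ℝ)⁻¹ * (tabPolicy θ x y *
              (gt rRM lam θref θ x y - ∑ y' : Y, tabPolicy θ x y' * gt rRM lam θref θ x y'))) *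
              v (y, x)
            = (S.card : ℝ)⁻¹ * ∑ y : Y, (tabPolicy θ x y *
              (gt rRM lam θref θ x y - ∑ y' : Y, tabPolicy θ x y' * gt rRM lam θref θ x y')) *
              v (y, x) := by
          rw [Finset.mul_sum]
          exact Finset.sum_congr rfl fun y _ => by ring
        rw [r1]
        congr 1
        simp only [mul_sub, sub_mul, Finset.sum_sub_distrib]
        rw [l2, r2]
        congr 1
        exact Finset.sum_congr rfl fun y _ => by ring
      _ = ∑ x : X, ∑ y : Y, gradFn S rRM lam θref θ (y, x) * v (y, x) :=
        Finset.sum_subset (Finset.subset_univ S) (fun x _ hx => hout x hx)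
      _ = ∑ i : Y × X, gradFn S rRM lam θref θ i * v i := by
        rw [Fintype.sum_prod_type]
        exact Finset.sum_comm
      _ = (InnerProductSpace.toDual ℝ _) (gradFn S rRM lam θref θ) v := by
        rw [InnerProductSpace.toDual_apply_apply, PiLp.inner_apply]
        simp [RCLike.inner_apply, mul_comm]

lemma log_le_div_e {t : ℝ} (ht : 0 < t) : Real.log t ≤ t / Real.exp 1 := by
  have h := Real.log_le_sub_one_of_pos (x := t / Real.exp 1) (by positivity)
  rw [Real.log_div ht.ne' (Real.exp_pos 1).ne', Real.log_exp] at h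
  linarith

omit [Fintype X] in
lemma gibbs_aux (p q : Y → ℝ) (hp : ∀ y, 0 < p y) (hps : ∑ y : Y, p y = 1)
    (hq : ∀ y, 0 < q y) (hqs : ∑ y : Y, q y = 1) :
    0 ≤ ∑ y : Y, p y * (Real.log (p y) - Real.log (q y)) := by
  have hle : ∀ y ∈ Finset.univ, p y * (Real.log (q y) - Real.log (p y)) ≤ q y - p y := by
    intro y _
    have h1 : Real.log (q y / p y) ≤ q y / p y - 1 :=
      Real.log_le_sub_one_of_pos (div_pos (hq y) (hp y))
    rw [Real.log_div (hq y).ne' (hp y).ne'] at h1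
    calc p y * (Real.log (q y) - Real.log (p y)) ≤ p y * (q y / p y - 1) :=
          mul_le_mul_of_nonneg_left h1 (hp y).le
      _ = q y - p y := by
          rw [mul_sub, mul_div_cancel₀ _ (hp y).ne', mul_one]
  have h : ∑ y : Y, p y * (Real.log (q y) - Real.log (p y)) ≤ 0 := by
    calc ∑ y : Y, p y * (Real.log (q y) - Real.log (p y)) ≤ ∑ y : Y, (q y - p y) :=
          Finset.sum_le_sum hle
      _ = 0 := by rw [Finset.sum_sub_distrib, hps, hqs]; ring
  have h2 : ∑ y : Y, p y * (Real.log (p y) - Real.log (q y))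
      = -∑ y : Y, p y * (Real.log (q y) - Real.log (p y)) := by
    rw [← Finset.sum_neg_distrib]
    exact Finset.sum_congr rfl fun y _ => by ring
  rw [h2]
  linarith

omit [Fintype X] in
set_option maxHeartbeats 800000 in
/-- the key per-output bound. -/
lemma key_bound (lam m : ℝ) (hlam : 0 ≤ lam) (p q r : Y → ℝ)
    (hp : ∀ y, 0 < p y) (hps : ∑ y : Y, p y = 1)
    (hq : ∀ y, 0 < q y) (hqs : ∑ y : Y, q y = 1)
    (hm : ∀ y, m ≤ q y) (hm0 : 0 < m)
    (hr : ∀ y, -1 ≤ r y ∧ r y ≤ 1)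
    (g : Y → ℝ) (hg : ∀ y, g y = r y - lam * (Real.log (p y / q y) + 1)) (y : Y) :
    p y * (g y - ∑ y' : Y, p y' * g y') -
      ∑ y' : Y, p y' ^ 2 * (g y' - ∑ y'' : Y, p y'' * g y'') ≤
      4 + 2 * lam * Real.log (1 / m) := by
  classical
  set ℓ : Y → ℝ := fun y' => Real.log (p y') - Real.log (q y') with hℓ
  have hgl : ∀ y', g y' = r y' - lam * (ℓ y' + 1) := by
    intro y'
    rw [hg y', hℓ]
    rw [Real.log_div (hp y').ne' (hq y').ne']
  set rb := ∑ y' : Y, p y' * r y' with hrbdef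
  set lb := ∑ y' : Y, p y' * ℓ y' with hlbdef
  set L := Real.log (1 / m) with hLdef
  have hLm : L = -Real.log m := by rw [hLdef, one_div, Real.log_inv]
  have hp1 : ∀ y', p y' ≤ 1 := by
    intro y'
    have h := Finset.single_le_sum (f := fun z => p z) (fun i _ => (hp i).le) (Finset.mem_univ y')
    rwa [hps] at h
  have hq1 : ∀ y', q y' ≤ 1 := by
    intro y'
    have h := Finset.single_le_sum (f := fun z => q z) (fun i _ => (hq i).le) (Finset.mem_univ y')
    rwa [hqs] at h
  have hm1 : m ≤ 1 := le_trans (hm y) (hq1 y)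
  have hL0 : 0 ≤ L := by
    rw [hLm]
    simp only [neg_nonneg]
    exact Real.log_nonpos hm0.le hm1
  have hlup : ∀ y', ℓ y' ≤ L := by
    intro y'
    have h1 : Real.log (p y') ≤ 0 := Real.log_nonpos (hp y').le (hp1 y')
    have h2 : Real.log m ≤ Real.log (q y') := Real.log_le_log hm0 (hm y')
    rw [hLm]
    simp only [hℓ]
    linarith
  have hlb0 : 0 ≤ lb := gibbs_aux p q hp hps hq hqs
  have hlbL : lb ≤ L := by
    calc lb ≤ ∑ y' : Y, p y' * L :=
          Finset.sum_le_sum fun y' _ => mul_le_mul_of_nonneg_left (hlup y') (hp y').le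
      _ = L := by rw [← Finset.sum_mul, hps, one_mul]
  have hsq0 : (0:ℝ) ≤ ∑ y' : Y, p y' ^ 2 := Finset.sum_nonneg fun y' _ => sq_nonneg _
  have hsq1 : ∑ y' : Y, p y' ^ 2 ≤ 1 := by
    calc ∑ y' : Y, p y' ^ 2 ≤ ∑ y' : Y, p y' :=
          Finset.sum_le_sum fun y' _ => by nlinarith [hp y', hp1 y']
      _ = 1 := hps
  have hrb1 : rb ≤ 1 := by
    calc rb ≤ ∑ y' : Y, p y' :=
          Finset.sum_le_sum fun y' _ => by nlinarith [hp y', (hr y').2]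
      _ = 1 := hps
  have hrb2 : -1 ≤ rb := by
    have : ∑ y' : Y, -p y' ≤ rb :=
      Finset.sum_le_sum fun y' _ => by nlinarith [hp y', (hr y').1]
    have h' : ∑ y' : Y, -p y' = -1 := by rw [Finset.sum_neg_distrib, hps]
    linarith
  -- value of the mean of g
  have hgbar : ∑ y' : Y, p y' * g y' = rb - lam * (lb + 1) := by
    calc ∑ y' : Y, p y' * g y' = ∑ y' : Y, (p y' * r y' - lam * (p y' * ℓ y') - lam * p y') :=
          Finset.sum_congr rfl fun y' _ => by rw [hgl y']; ring
      _ = rb - lam * lb - lam * 1 := by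
          rw [Finset.sum_sub_distrib, Finset.sum_sub_distrib, ← Finset.mul_sum, ← Finset.mul_sum,
            hps]
      _ = rb - lam * (lb + 1) := by ring
  -- decompose the sum term
  have hsum2 : ∑ y' : Y, p y' ^ 2 * (g y' - (rb - lam * (lb + 1)))
      = (∑ y' : Y, p y' ^ 2 * (r y' - rb)) - lam * (∑ y' : Y, p y' ^ 2 * ℓ y')
        + lam * lb * (∑ y' : Y, p y' ^ 2) := by
    calc ∑ y' : Y, p y' ^ 2 * (g y' - (rb - lam * (lb + 1)))
        = ∑ y' : Y, (p y' ^ 2 * (r y' - rb) - lam * (p y' ^ 2 * ℓ y') + lam * lb * p y' ^ 2) :=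
          Finset.sum_congr rfl fun y' _ => by rw [hgl y']; ring
      _ = _ := by
          rw [Finset.sum_add_distrib, Finset.sum_sub_distrib, ← Finset.mul_sum, ← Finset.mul_sum]
  -- bound the reward parts
  have B1 : p y * (r y - rb) ≤ 2 := by nlinarith [hp y, hp1 y, (hr y).1, (hr y).2]
  have B2 : -2 ≤ ∑ y' : Y, p y' ^ 2 * (r y' - rb) := by
    have hterm : ∀ y' ∈ Finset.univ, -2 * p y' ≤ p y' ^ 2 * (r y' - rb) := by
      intro y' _
      nlinarith [hp y', hp1 y', (hr y').1, (hr y').2]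
    have := Finset.sum_le_sum hterm
    have h' : ∑ y' : Y, -2 * p y' = -2 := by rw [← Finset.mul_sum, hps]; ring
    linarith
  -- bound for T1
  have B3 : -(p y * ℓ y) ≤ L := by
    rcases lt_or_ge 1 (Fintype.card Y) with hcard | hcard
    · -- at least two outputs
      obtain ⟨a, b, hab⟩ := Fintype.exists_pair_of_one_lt_card hcard
      have hpair : ∑ z ∈ ({a, b} : Finset Y), q z ≤ ∑ z : Y, q z :=
        Finset.sum_le_sum_of_subset_of_nonneg (Finset.subset_univ _)
          (fun z _ _ => (hq z).le)
      rw [Finset.sum_pair hab, hqs] at hpair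
      have h2m : m + m ≤ 1 := le_trans (add_le_add (hm a) (hm b)) hpair
      have hlog2 : Real.log 2 ≤ L := by
        rw [hLdef]
        apply Real.log_le_log (by norm_num)
        rw [le_div_iff₀ hm0]
        linarith
      have he : -(p y * ℓ y) ≤ q y / Real.exp 1 := by
        have h1 : Real.log (q y / p y) ≤ (q y / p y) / Real.exp 1 :=
          log_le_div_e (div_pos (hq y) (hp y))
        have h2 : p y * Real.log (q y / p y) ≤ p y * ((q y / p y) / Real.exp 1) :=
          mul_le_mul_of_nonneg_left h1 (hp y).le
        have h3 : p y * ((q y / p y) / Real.exp 1) = q y / Real.exp 1 := by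
          field_simp
          exact mul_div_cancel_left₀ (q y) (hp y).ne'
        have h4 : -(p y * ℓ y) = p y * Real.log (q y / p y) := by
          simp only [hℓ]
          rw [Real.log_div (hq y).ne' (hp y).ne']
          ring
        rw [h4]
        linarith
      have hei : q y / Real.exp 1 ≤ 1 / 2 := by
        have h2e : (2:ℝ) ≤ Real.exp 1 := by
          have := Real.add_one_le_exp (1:ℝ)
          linarith
        rw [div_le_div_iff₀ (Real.exp_pos 1) (by norm_num)]
        nlinarith [hq1 y, (hq y).le]
      have hhalf : (1:ℝ) / 2 ≤ Real.log 2 := by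
        linarith [Real.log_two_gt_d9]
      exact le_trans he (le_trans hei (le_trans hhalf hlog2))
    · -- exactly one output
      have hone : Fintype.card Y = 1 := le_antisymm hcard Fintype.card_pos
      have hall : ∀ z : Y, z = y := fun z => Fintype.card_le_one_iff.mp hone.le z y
      have huniv : (Finset.univ : Finset Y) = {y} := by
        ext z
        simp [hall z]
      have hpy : p y = 1 := by rw [← hps, huniv, Finset.sum_singleton]
      have hqy : q y = 1 := by rw [← hqs, huniv, Finset.sum_singleton]
      have : ℓ y = 0 := by simp [hℓ, hpy, hqy]
      rw [this]
      simpa using hL0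
  -- bound for T2 + T3
  have B4 : p y * lb + (∑ y' : Y, p y' ^ 2 * ℓ y') - lb * (∑ y' : Y, p y' ^ 2) ≤ L := by
    have hsl : ∑ y' : Y, p y' ^ 2 * ℓ y' ≤ L * (∑ y' : Y, p y' ^ 2) := by
      rw [Finset.mul_sum]
      refine Finset.sum_le_sum fun y' _ => ?_
      have := mul_le_mul_of_nonneg_left (hlup y') (sq_nonneg (p y'))
      linarith [this]
    rcases le_or_gt (∑ y' : Y, p y' ^ 2) (p y) with hc | hc
    · have h1 : lb * (p y - ∑ y' : Y, p y' ^ 2) ≤ L * (p y - ∑ y' : Y, p y' ^ 2) :=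
        mul_le_mul_of_nonneg_right hlbL (by linarith)
      have h2 : L * p y ≤ L := mul_le_of_le_one_right hL0 (hp1 y)
      linarith [hsl, h1, h2]
    · have h1 : lb * (p y - ∑ y' : Y, p y' ^ 2) ≤ 0 :=
        mul_nonpos_of_nonneg_of_nonpos hlb0 (by linarith)
      have h2 : L * (∑ y' : Y, p y' ^ 2) ≤ L := mul_le_of_le_one_right hL0 hsq1
      linarith [hsl, h1, h2]
  -- put everything together
  rw [hgbar, hsum2, hgl y]
  have hmul := mul_le_mul_of_nonneg_left (add_le_add B3 B4) hlam
  linarith [hmul, B1, B2]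

end KLB


/-- Lemma (probability growth bound under gradient flow): for a tabular policy trained via
gradient flow on the RLHF objective, for any prompt `x ∈ S`, subset `A ⊆ Y`, and `T ≥ 0`:
`π_{θ(T)}(A|x) ≤ π_{θ(0)}(A|x) · exp((1/|S|)(4 + 2λ ln(1/min_y π_{θ(0)}(y|x))) T)`. -/
theorem kl_prob_upper_bound {X Y : Type*} [Fintype X] [Fintype Y] [Nonempty Y]
    (rRM : X → Y → ℝ) (hrRM : ∀ x y, rRM x y ∈ Set.Icc (-1 : ℝ) 1)
    (lam : ℝ) (hlam : 0 ≤ lam)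
    (S : Finset X) (hS : S.Nonempty)
    (θref : EuclideanSpace ℝ (Y × X))
    (θ : ℝ → EuclideanSpace ℝ (Y × X)) (hθ0 : θ 0 = θref)
    (hflow : ∀ t : ℝ, 0 ≤ t →
      HasDerivAt θ (gradient (rlhfObjTab S rRM lam θref) (θ t)) t)
    (x : X) (hx : x ∈ S) (A : Finset Y) (T : ℝ) (hT : 0 ≤ T) :
    ∑ y ∈ A, tabPolicy (θ T) x y ≤
      (∑ y ∈ A, tabPolicy (θ 0) x y) *
        Real.exp ((S.card : ℝ)⁻¹ *
          (4 + 2 * lam * Real.log (1 / Finset.univ.inf' Finset.univ_nonempty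
            (fun y => tabPolicy (θ 0) x y))) * T) := by
  classical
  rcases A.eq_empty_or_nonempty with rfl | hA
  · simp
  set m := Finset.univ.inf' Finset.univ_nonempty (fun y => tabPolicy (θ 0) x y) with hmdef
  have hm_le : ∀ y : Y, m ≤ tabPolicy θref x y := by
    intro y
    rw [← hθ0]
    exact Finset.inf'_le _ (Finset.mem_univ y)
  have hm0 : 0 < m := by
    obtain ⟨y0, _, hy0⟩ := Finset.exists_mem_eq_inf' (s := (Finset.univ : Finset Y))
      Finset.univ_nonempty (fun y => tabPolicy (θ 0) x y)
    rw [hmdef, hy0]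
    exact KLB.tab_pos _ _ _
  set C : ℝ := (S.card : ℝ)⁻¹ * (4 + 2 * lam * Real.log (1 / m)) with hCdef
  set pA : ℝ → ℝ := fun t => ∑ y ∈ A, tabPolicy (θ t) x y with hpA
  have hpApos : ∀ t, 0 < pA t := fun t => Finset.sum_pos (fun y _ => KLB.tab_pos _ _ _) hA
  set h : ℝ → ℝ := fun t => Real.log (pA t) with hh
  have hninv : (0:ℝ) ≤ (S.card : ℝ)⁻¹ := by positivity
  have hDh : ∀ t : ℝ, 0 ≤ t → ∃ d : ℝ, HasDerivAt h d t ∧ d ≤ C := by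
    intro t ht
    set v := KLB.gradFn S rRM lam θref (θ t) with hv
    have hgrad : gradient (rlhfObjTab S rRM lam θref) (θ t) = v :=
      (KLB.hasGradientAt_obj S rRM lam θref (θ t)).gradient
    have hθ' : HasDerivAt θ v t := hgrad ▸ hflow t ht
    have hFA : HasFDerivAt (fun θ' => ∑ y ∈ A, tabPolicy θ' x y)
        (∑ y ∈ A, KLB.dTab x y (θ t)) (θ t) :=
      HasFDerivAt.fun_sum fun y _ => KLB.hasFDerivAt_tab x y (θ t)
    have hpA' : HasDerivAt pA ((∑ y ∈ A, KLB.dTab x y (θ t)) v) t :=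
      hFA.comp_hasDerivAt t hθ'
    have hlog := hpA'.log (hpApos t).ne'
    refine ⟨_, hlog, ?_⟩
    rw [div_le_iff₀ (hpApos t)]
    -- pointwise bound on coordinates of the gradient
    have hveq : ∀ y' : Y, v (y', x) = (S.card : ℝ)⁻¹ * (tabPolicy (θ t) x y' *
        (KLB.gt rRM lam θref (θ t) x y' -
          ∑ y'' : Y, tabPolicy (θ t) x y'' * KLB.gt rRM lam θref (θ t) x y'')) := by
      intro y'
      simp [hv, KLB.gradFn, hx]
    have hterm : ∀ y ∈ A, KLB.dTab x y (θ t) v ≤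
        ((S.card : ℝ)⁻¹ * (4 + 2 * lam * Real.log (1 / m))) * tabPolicy (θ t) x y := by
      intro y _
      rw [KLB.dTab_apply]
      simp only [hveq]
      have hK := KLB.key_bound lam m hlam (fun y' => tabPolicy (θ t) x y')
        (fun y' => tabPolicy θref x y') (rRM x)
        (fun y' => KLB.tab_pos _ _ _) (KLB.tab_sum _ _)
        (fun y' => KLB.tab_pos _ _ _) (KLB.tab_sum _ _)
        hm_le hm0 (fun y' => ⟨(hrRM x y').1, (hrRM x y').2⟩)
        (KLB.gt rRM lam θref (θ t) x) (fun y' => rfl) y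
      have hfact : ∑ y' : Y, tabPolicy (θ t) x y' * ((S.card : ℝ)⁻¹ * (tabPolicy (θ t) x y' *
            (KLB.gt rRM lam θref (θ t) x y' -
              ∑ y'' : Y, tabPolicy (θ t) x y'' * KLB.gt rRM lam θref (θ t) x y'')))
          = (S.card : ℝ)⁻¹ * ∑ y' : Y, tabPolicy (θ t) x y' ^ 2 *
            (KLB.gt rRM lam θref (θ t) x y' -
              ∑ y'' : Y, tabPolicy (θ t) x y'' * KLB.gt rRM lam θref (θ t) x y'') := by
        rw [Finset.mul_sum]
        exact Finset.sum_congr rfl fun y' _ => by ring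
      rw [hfact]
      have hmono := mul_le_mul_of_nonneg_left hK
        (mul_nonneg hninv (KLB.tab_pos (θ t) x y).le)
      linarith [hmono]
    calc (∑ y ∈ A, KLB.dTab x y (θ t)) v = ∑ y ∈ A, KLB.dTab x y (θ t) v := by
          rw [ContinuousLinearMap.sum_apply]
      _ ≤ ∑ y ∈ A, ((S.card : ℝ)⁻¹ * (4 + 2 * lam * Real.log (1 / m))) * tabPolicy (θ t) x y :=
          Finset.sum_le_sum hterm
      _ = C * pA t := by rw [hpA, ← Finset.mul_sum]
  -- monotonicity of t ↦ C t - h t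
  have hmono : MonotoneOn (fun t => C * t - h t) (Set.Ici (0:ℝ)) := by
    apply monotoneOn_of_deriv_nonneg (convex_Ici 0)
    · intro t ht
      obtain ⟨d, hd, _⟩ := hDh t ht
      exact (((hasDerivAt_id t).const_mul C).sub hd).continuousAt.continuousWithinAt
    · rw [interior_Ici]
      intro t ht
      obtain ⟨d, hd, _⟩ := hDh t (le_of_lt ht)
      exact (((hasDerivAt_id t).const_mul C).sub hd).differentiableAt.differentiableWithinAt
    · rw [interior_Ici]
      intro t ht
      obtain ⟨d, hd, hdC⟩ := hDh t (le_of_lt ht)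
      have hψ : HasDerivAt (fun t => C * t - h t) (C * 1 - d) t :=
        ((hasDerivAt_id t).const_mul C).sub hd
      rw [hψ.deriv]
      linarith
  have hMT := hmono (Set.self_mem_Ici) (Set.mem_Ici.mpr hT) hT
  simp only [mul_zero, zero_sub] at hMT
  have hfin : h T ≤ h 0 + C * T := by linarith
  have e1 : pA T = Real.exp (h T) := (Real.exp_log (hpApos T)).symm
  have e2 : pA 0 = Real.exp (h 0) := (Real.exp_log (hpApos 0)).symm
  calc pA T = Real.exp (h T) := e1
    _ ≤ Real.exp (h 0 + C * T) := Real.exp_le_exp.mpr hfin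
    _ = pA 0 * Real.exp (C * T) := by rw [Real.exp_add, e2]
end
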